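/- arXiv:1303.4147 — 4 statements merged into one kernel-verified Lean document; each statement's English description precedes it below -/
import Mathlib

section
/- In G(d,1,2) = Z_d ≀ S_2 with d ≥ 2, let t = (1,0 | id), r = (0,0 | (1 2)), v = t^{d-1} r, and w_i = t^i for 0 ≤ i < d. If 0 ≤ m < 2d, 0 ≤ i, j < d, and v^m w_i = w_j, then m = 0 and i = j. Consequently the 2d^2 elements v^m w_i are pairwise distinct and enumerate all of G(d,1,2), so repeating the edge sequence [t,...,t (d-1 times), r] 2d times gives a Hamiltonian cycle in the Cayley graph of G(d,1,2) with respect to {r,t}. -/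
/-- The wreath product `ZMod m ≀ Sₙ`: elements `(a | σ)` with `a : Fin n → ZMod m`
and `σ` a permutation of `{1,…,n}` (i.e. of `Fin n`). -/
structure W (m n : ℕ) : Type where
  a : Fin n → ZMod m
  p : Equiv.Perm (Fin n)

namespace W

lemma ext' {m n : ℕ} {x y : W m n} (h1 : x.a = y.a) (h2 : x.p = y.p) : x = y := by
  cases x; cases y; cases h1; cases h2; rfl

instance (m n : ℕ) : Mul (W m n) :=
  ⟨fun x y => ⟨fun i => x.a i + y.a (x.p i), y.p * x.p⟩⟩

instance (m n : ℕ) : One (W m n) := ⟨⟨0, 1⟩⟩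

instance (m n : ℕ) : Inv (W m n) :=
  ⟨fun x => ⟨fun i => -(x.a (x.p.symm i)), x.p⁻¹⟩⟩

lemma mul_def {m n : ℕ} (x y : W m n) :
    x * y = ⟨fun i => x.a i + y.a (x.p i), y.p * x.p⟩ := rfl

lemma one_def {m n : ℕ} : (1 : W m n) = ⟨0, 1⟩ := rfl

lemma inv_def {m n : ℕ} (x : W m n) :
    x⁻¹ = ⟨fun i => -(x.a (x.p.symm i)), x.p⁻¹⟩ := rfl

/-- The wreath product group structure, with multiplication
`(a | σ)(b | τ) = (aᵢ + b_{σ(i)} | στ)` (where `στ` means: apply `σ` first). -/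
instance (m n : ℕ) : Group (W m n) where
  mul_assoc x y z := by
    refine ext' (funext fun i => ?_) ?_
    · show (x.a i + y.a (x.p i)) + z.a ((y.p * x.p) i)
        = x.a i + (y.a (x.p i) + z.a (y.p (x.p i)))
      simp [Equiv.Perm.mul_apply, add_assoc]
    · show (z.p * (y.p * x.p)) = (z.p * y.p) * x.p
      exact (mul_assoc _ _ _).symm
  one_mul x := by
    refine ext' (funext fun i => ?_) ?_
    · show 0 + x.a ((1 : Equiv.Perm (Fin _)) i) = x.a i; simp
    · show x.p * 1 = x.p; simp
  mul_one x := by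
    refine ext' (funext fun i => ?_) ?_
    · show x.a i + 0 = x.a i; simp
    · show 1 * x.p = x.p; simp
  inv_mul_cancel x := by
    refine ext' (funext fun i => ?_) ?_
    · simp [mul_def, inv_def, one_def, Equiv.Perm.inv_def]
    · show x.p * x.p⁻¹ = 1; exact mul_inv_cancel x.p

end W

/-- The subgroup of `ZMod m ≀ Sₙ` of elements whose diagonal entries sum to `0 mod e`.
For `m = d*e` this is the imprimitive complex reflection group `G(de,e,n)`. -/
def Gsub (m e n : ℕ) (h : e ∣ m) : Subgroup (W m n) where
  carrier := {x | ZMod.castHom h (ZMod e) (∑ i, x.a i) = 0}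
  one_mem' := by simp [W.one_def]
  mul_mem' := by
    intro x y hx hy
    show ZMod.castHom h (ZMod e) (∑ i, (x.a i + y.a (x.p i))) = 0
    rw [Finset.sum_add_distrib, Equiv.sum_comp x.p y.a, map_add]
    rw [Set.mem_setOf_eq] at hx hy
    rw [hx, hy, add_zero]
  inv_mem' := by
    intro x hx
    show ZMod.castHom h (ZMod e) (∑ i, -(x.a (x.p.symm i))) = 0
    rw [Finset.sum_neg_distrib, Equiv.sum_comp x.p.symm x.a, map_neg]
    rw [Set.mem_setOf_eq] at hx
    rw [hx, neg_zero]

lemma mem_Gsub {m e n : ℕ} (h : e ∣ m) (x : W m n) :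
    x ∈ Gsub m e n h ↔ ZMod.castHom h (ZMod e) (∑ i, x.a i) = 0 := Iff.rfl

/-- The imprimitive complex reflection group `G(de,e,n)`. -/
abbrev Gde (d e n : ℕ) : Subgroup (W (d * e) n) := Gsub (d * e) e n (dvd_mul_left e d)

/-- A Hamiltonian cycle in the (undirected, right) Cayley graph `Γ(G,S)`,
encoded as the list of edge labels (from `S ∪ S⁻¹`) along the cycle starting at `1`:
the partial products visit every element of `G` exactly once and the
total product returns to `1`. -/
def IsHamCycle {G : Type*} [Group G] (S : Set G) (l : List G) : Prop :=
  (∀ x ∈ l, x ∈ S ∨ x⁻¹ ∈ S) ∧ l.prod = 1 ∧ l.length = Nat.card G ∧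
    ((List.range l.length).map fun k => (l.take k).prod).Nodup


section aux
open List

variable {d : ℕ}

private def tE (d : ℕ) : W d 2 := ⟨![1,0],1⟩
private def rE (d : ℕ) : W d 2 := ⟨![0,0],Equiv.swap 0 1⟩
private def vE (d : ℕ) : W d 2 := ⟨![-1,0],Equiv.swap 0 1⟩

private lemma tE_pow (i : ℕ) : (tE d) ^ i = ⟨![(i:ZMod d),0],1⟩ := by
  induction i with
  | zero =>
      rw [pow_zero, W.one_def]
      exact W.ext' (funext fun j => by fin_cases j <;> simp) rfl
  | succ n ih =>
      rw [pow_succ, ih, tE, W.mul_def]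
      refine W.ext' (funext fun j => ?_) (by simp)
      fin_cases j <;> simp <;> push_cast <;> ring

private lemma vE_eq (hd : 1 ≤ d) : (tE d) ^ (d-1) * rE d = vE d := by
  rw [tE_pow, rE, W.mul_def, vE]
  refine W.ext' (funext fun j => ?_) (by simp)
  have : ((d - 1 : ℕ) : ZMod d) = -1 := by
    push_cast [Nat.cast_sub hd]; simp
  fin_cases j <;> simp [this]

private lemma vE_sq : (vE d) ^ 2 = ⟨![-1,-1],1⟩ := by
  rw [pow_two, vE, W.mul_def]
  refine W.ext' (funext fun j => ?_) (by simp)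
  fin_cases j <;> simp

private lemma vE_pow_even (k : ℕ) : (vE d) ^ (2*k) = ⟨![-(k:ZMod d),-(k:ZMod d)],1⟩ := by
  induction k with
  | zero =>
      rw [mul_zero, pow_zero, W.one_def]
      exact W.ext' (funext fun j => by fin_cases j <;> simp) rfl
  | succ n ih =>
      have : 2 * (n+1) = 2*n + 2 := by ring
      rw [this, pow_add, ih, vE_sq, W.mul_def]
      refine W.ext' (funext fun j => ?_) (by simp)
      fin_cases j <;> simp <;> push_cast <;> ring

private lemma vE_pow_odd (k : ℕ) :
    (vE d) ^ (2*k+1) = ⟨![-((k:ZMod d)+1),-(k:ZMod d)],Equiv.swap 0 1⟩ := by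
  rw [pow_succ, vE_pow_even, vE, W.mul_def]
  refine W.ext' (funext fun j => ?_) (by simp)
  fin_cases j <;> simp <;> ring

private lemma even_mul_t (k i : ℕ) :
    (vE d) ^ (2*k) * (tE d) ^ i = ⟨![(i:ZMod d)-k, -(k:ZMod d)],1⟩ := by
  rw [vE_pow_even, tE_pow, W.mul_def]
  refine W.ext' (funext fun j => ?_) (by simp)
  fin_cases j <;> simp <;> ring

private lemma odd_mul_t (k i : ℕ) :
    (vE d) ^ (2*k+1) * (tE d) ^ i
      = ⟨![-((k:ZMod d)+1), (i:ZMod d)-k],Equiv.swap 0 1⟩ := by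
  rw [vE_pow_odd, tE_pow, W.mul_def]
  refine W.ext' (funext fun j => ?_) (by simp)
  fin_cases j <;> simp [Equiv.swap_apply_left, Equiv.swap_apply_right] <;> ring

private lemma cast_inj_lt {a b : ℕ} (ha : a < d) (hb : b < d)
    (h : (a : ZMod d) = b) : a = b := by
  rw [← ZMod.val_cast_of_lt ha, ← ZMod.val_cast_of_lt hb, h]

private lemma swap_ne_one : (Equiv.swap (0:Fin 2) 1) ≠ 1 := by decide

private lemma W_eq_iff {a b : Fin 2 → ZMod d} {p q : Equiv.Perm (Fin 2)} :
    (⟨a,p⟩ : W d 2) = ⟨b,q⟩ ↔ (a 0 = b 0 ∧ a 1 = b 1) ∧ p = q := by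
  constructor
  · rintro h
    injection h with h1 h2
    exact ⟨⟨congrFun h1 0, congrFun h1 1⟩, h2⟩
  · rintro ⟨⟨h0, h1⟩, h2⟩
    exact W.ext' (funext fun j => by fin_cases j <;> assumption) h2

private lemma key (hd : 2 ≤ d) {m i m' i' : ℕ} (hm : m < 2*d) (hi : i < d)
    (hm' : m' < 2*d) (hi' : i' < d)
    (h : (vE d)^m * (tE d)^i = (vE d)^m' * (tE d)^i') : m = m' ∧ i = i' := by
  rcases Nat.even_or_odd m with ⟨k, hk⟩ | ⟨k, hk⟩ <;>
    rcases Nat.even_or_odd m' with ⟨k', hk'⟩ | ⟨k', hk'⟩ <;>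
      subst hk hk' <;>
      [rw [show k + k = 2*k by ring, show k' + k' = 2*k' by ring, even_mul_t, even_mul_t, W_eq_iff] at h;
       rw [show k + k = 2*k by ring, even_mul_t, odd_mul_t, W_eq_iff] at h;
       rw [show k' + k' = 2*k' by ring, odd_mul_t, even_mul_t, W_eq_iff] at h;
       rw [odd_mul_t, odd_mul_t, W_eq_iff] at h]
  · -- even, even
    obtain ⟨⟨h0, h1⟩, -⟩ := h
    have hkk : k = k' := cast_inj_lt (a := k) (b := k') (by omega) (by omega)
      (neg_inj.mp h1)
    subst hkk
    have hii : i = i' := cast_inj_lt hi hi' (by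
      have := sub_left_injective.eq_iff.mp h0; exact this)
    omega
  · exact absurd h.2 swap_ne_one.symm
  · exact absurd h.2 swap_ne_one
  · -- odd, odd
    obtain ⟨⟨h0, h1⟩, -⟩ := h
    have hkk : k = k' := cast_inj_lt (a := k) (b := k') (by omega) (by omega)
      (add_right_cancel (neg_inj.mp h0))
    subst hkk
    have hii : i = i' := cast_inj_lt hi hi' (by
      have := sub_left_injective.eq_iff.mp h1; exact this)
    omega

private lemma flatten_replicate_prod {M : Type*} [Monoid M] (xs : List M) (n : ℕ) :
    ((List.replicate n xs).flatten).prod = xs.prod ^ n := by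
  induction n with
  | zero => simp
  | succ n ih =>
      rw [List.replicate_succ, List.flatten_cons, List.prod_append, ih, pow_succ']

private lemma take_flatten_replicate {α : Type*} (xs : List α) (m : ℕ) :
    ∀ (N s : ℕ), m < N → s ≤ xs.length →
    ((List.replicate N xs).flatten.take (m * xs.length + s))
      = (List.replicate m xs).flatten ++ xs.take s := by
  induction m with
  | zero =>
      intro N s hN hs
      obtain ⟨N', rfl⟩ : ∃ N', N = N' + 1 := ⟨N - 1, by omega⟩
      rw [List.replicate_succ, List.flatten_cons]
      simp only [Nat.zero_mul, Nat.zero_add, List.replicate_zero,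
        List.flatten_nil, List.nil_append]
      exact List.take_append_of_le_length hs
  | succ m ih =>
      intro N s hN hs
      obtain ⟨N', rfl⟩ : ∃ N', N = N' + 1 := ⟨N - 1, by omega⟩
      rw [List.replicate_succ, List.flatten_cons,
        show (m+1) * xs.length + s = xs.length + (m * xs.length + s) by ring,
        List.take_length_add_append, ih N' s (by omega) hs]
      simp [List.replicate_succ]

private lemma card_W (d : ℕ) (hd : 2 ≤ d) : Nat.card (W d 2) = 2 * d * d := by
  have : NeZero d := ⟨by omega⟩
  have e : W d 2 ≃ (Fin 2 → ZMod d) × Equiv.Perm (Fin 2) :=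
    ⟨fun x => (x.a, x.p), fun y => ⟨y.1, y.2⟩, fun _ => rfl, fun _ => rfl⟩
  rw [Nat.card_congr e, Nat.card_prod, Nat.card_fun, Nat.card_zmod,
    Nat.card_eq_fintype_card (α := Equiv.Perm (Fin 2)), Fintype.card_perm]
  simp [Nat.card_eq_fintype_card]
  ring

private lemma block_prod (hd : 2 ≤ d) :
    (List.replicate (d-1) (tE d) ++ [rE d]).prod = vE d := by
  rw [List.prod_append, List.prod_replicate, List.prod_singleton, vE_eq (by omega)]

private lemma take_prod (hd : 2 ≤ d) (m s : ℕ) (hm : m < 2*d) (hs : s < d) :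
    (((List.replicate (2*d) (List.replicate (d-1) (tE d) ++ [rE d])).flatten).take
        (m * d + s)).prod = (vE d) ^ m * (tE d) ^ s := by
  have hlen : (List.replicate (d-1) (tE d) ++ [rE d]).length = d := by
    simp; omega
  rw [show m * d + s = m * (List.replicate (d-1) (tE d) ++ [rE d]).length + s by
      rw [hlen],
    take_flatten_replicate _ _ _ _ hm (by rw [hlen]; omega),
    List.prod_append, flatten_replicate_prod, block_prod hd,
    List.take_append_of_le_length (by simp; omega), List.take_replicate,
    show s ⊓ (d-1) = s by omega, List.prod_replicate]

end aux

/-- Lemma 4.1. In `G(d,1,2) = Z_d ≀ S₂` with `d ≥ 2`, with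
`t = (1,0 | id)`, `r = (0,0 | (1 2))`, `v = t^(d-1) r`, `wᵢ = tⁱ` for `0 ≤ i < d`:
if `0 ≤ m < 2d`, `0 ≤ i,j < d` and `v^m wᵢ = w_j`, then `m = 0` and `i = j`;
consequently the `2d²` elements `v^m wᵢ` are pairwise distinct and enumerate all of
`G(d,1,2)`, so repeating the edge sequence `[t,…,t (d-1 times), r]` `2d` times gives a
Hamiltonian cycle in the Cayley graph of `G(d,1,2)` with respect to `{r,t}`. -/
theorem stmt2 (d : ℕ) (hd : 2 ≤ d)
    (t r : W d 2) (ht : t = ⟨![1, 0], 1⟩) (hr : r = ⟨![0, 0], Equiv.swap 0 1⟩)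
    (v : W d 2) (hv : v = t ^ (d - 1) * r)
    (w : ℕ → W d 2) (hw : ∀ i, w i = t ^ i) :
    (∀ m < 2 * d, ∀ i < d, ∀ j < d, v ^ m * w i = w j → m = 0 ∧ i = j) ∧
    (∀ g : W d 2, ∃! p : ℕ × ℕ, p.1 < 2 * d ∧ p.2 < d ∧ g = v ^ p.1 * w p.2) ∧
    IsHamCycle {r, t}
      (List.flatten (List.replicate (2 * d) (List.replicate (d - 1) t ++ [r]))) := by
  have hdz : NeZero d := ⟨by omega⟩
  have htE : t = tE d := by rw [ht]; rfl
  have hrE : r = rE d := by rw [hr]; rfl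
  have hvE : v = vE d := by rw [hv, htE, hrE]; exact vE_eq (by omega)
  have hwE : ∀ i, w i = (tE d) ^ i := fun i => by rw [hw i, htE]
  have hcast : ∀ a : ZMod d, ((a.val : ℕ) : ZMod d) = a :=
    fun a => ZMod.natCast_rightInverse a
  refine ⟨?_, ?_, ?_⟩
  · -- part 1
    intro m hm i hi j hj h
    rw [hvE, hwE i, hwE j,
      show (tE d) ^ j = (vE d) ^ 0 * (tE d) ^ j by rw [pow_zero, one_mul]] at h
    exact key hd hm hi (by omega) hj h
  · -- part 2
    intro g
    have hg : g = ⟨![g.a 0, g.a 1], g.p⟩ :=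
      W.ext' (funext fun j => by fin_cases j <;> rfl) rfl
    have hperm : ∀ σ : Equiv.Perm (Fin 2), σ = 1 ∨ σ = Equiv.swap 0 1 := by decide
    obtain ⟨m, i, hm, hi, hrep⟩ :
        ∃ m i, m < 2*d ∧ i < d ∧ g = (vE d) ^ m * (tE d) ^ i := by
      rcases hperm g.p with h1 | h1
      · refine ⟨2 * (-(g.a 1)).val, (g.a 0 - g.a 1).val,
          by have := ZMod.val_lt (-(g.a 1)); omega, ZMod.val_lt _, ?_⟩
        rw [even_mul_t, hg, h1, W_eq_iff]
        refine ⟨⟨?_, ?_⟩, rfl⟩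
        · simp only [Matrix.cons_val_zero, hcast]; ring
        · simp only [Matrix.cons_val_one, Matrix.head_cons, Matrix.cons_val_zero,
            hcast]
          ring
      · refine ⟨2 * (-(g.a 0) - 1).val + 1, (g.a 1 - g.a 0 - 1).val,
          by have := ZMod.val_lt (-(g.a 0) - 1); omega, ZMod.val_lt _, ?_⟩
        rw [odd_mul_t, hg, h1, W_eq_iff]
        refine ⟨⟨?_, ?_⟩, rfl⟩
        · simp only [Matrix.cons_val_zero, hcast]; ring
        · simp only [Matrix.cons_val_one, Matrix.head_cons, Matrix.cons_val_zero,
            hcast]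
          ring
    refine ⟨(m, i), ⟨hm, hi, by rw [hvE, hwE]; exact hrep⟩, ?_⟩
    rintro ⟨m', i'⟩ ⟨hm', hi', hq⟩
    rw [hvE, hwE] at hq
    have hk := key hd hm' hi' hm hi (hq.symm.trans hrep)
    exact Prod.ext hk.1 hk.2
  · -- part 3
    rw [htE, hrE]
    unfold IsHamCycle
    have hlen : (List.flatten (List.replicate (2 * d)
        (List.replicate (d - 1) (tE d) ++ [rE d]))).length = 2*d*d := by
      rw [List.length_flatten, List.map_replicate, List.sum_replicate, smul_eq_mul]
      have : (List.replicate (d - 1) (tE d) ++ [rE d]).length = d := by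
        simp; omega
      rw [this]
    refine ⟨?_, ?_, ?_, ?_⟩
    · intro x hx
      rw [List.mem_flatten] at hx
      obtain ⟨ys, hys, hx⟩ := hx
      rw [List.eq_of_mem_replicate hys, List.mem_append] at hx
      rcases hx with hx | hx
      · left
        rw [List.eq_of_mem_replicate hx]
        exact Set.mem_insert_iff.mpr (Or.inr rfl)
      · left
        rw [List.mem_singleton] at hx
        rw [hx]
        exact Set.mem_insert _ _
    · rw [flatten_replicate_prod, block_prod hd, vE_pow_even, W.one_def]
      refine W.ext' (funext fun j => ?_) rfl
      fin_cases j <;> simp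
    · rw [hlen, card_W d hd]
    · rw [hlen]
      refine List.Nodup.map_on ?_ List.nodup_range
      intro x hx y hy hxy
      rw [List.mem_range] at hx hy
      have hxd : x / d < 2 * d := (Nat.div_lt_iff_lt_mul (by omega)).mpr hx
      have hyd : y / d < 2 * d := (Nat.div_lt_iff_lt_mul (by omega)).mpr hy
      have hx' : ((List.flatten (List.replicate (2 * d)
          (List.replicate (d - 1) (tE d) ++ [rE d]))).take x).prod
          = (vE d) ^ (x / d) * (tE d) ^ (x % d) := by
        conv_lhs => rw [show x = x / d * d + x % d from (Nat.div_add_mod' x d).symm]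
        exact take_prod hd _ _ hxd (Nat.mod_lt _ (by omega))
      have hy' : ((List.flatten (List.replicate (2 * d)
          (List.replicate (d - 1) (tE d) ++ [rE d]))).take y).prod
          = (vE d) ^ (y / d) * (tE d) ^ (y % d) := by
        conv_lhs => rw [show y = y / d * d + y % d from (Nat.div_add_mod' y d).symm]
        exact take_prod hd _ _ hyd (Nat.mod_lt _ (by omega))
      rw [hx', hy'] at hxy
      have hk := key hd hxd (Nat.mod_lt _ (by omega)) hyd (Nat.mod_lt _ (by omega)) hxy
      rw [← Nat.div_add_mod' x d, ← Nat.div_add_mod' y d, hk.1, hk.2]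
end

section
/- Let G be a group generated by S with Cayley graph Γ(G,S). Suppose C_1 and C_2 are vertex-disjoint cycles in Γ(G,S), r, s ∈ S with rs = sr, and there is a vertex g_1 on C_1 such that (g_1, g_1 s) is an edge of C_1, g_2 := g_1 r is a vertex of C_2, and (g_2, g_2 s) is an edge of C_2. Then there exists a cycle in Γ(G,S) whose vertex set is exactly the union of the vertex sets of C_1 and C_2. -/
/-- A cycle in the (undirected) Cayley graph `Γ(G,S)`: a base vertex together with a
nonempty closed self-avoiding sequence of steps, each step labeled by an element of
`S ∪ S⁻¹`. -/
structure CGCycle (G : Type*) [Group G] (S : Set G) where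
  base : G
  steps : List G
  nonempty : steps ≠ []
  mem_steps : ∀ x ∈ steps, x ∈ S ∨ x⁻¹ ∈ S
  closed : steps.prod = 1
  selfAvoiding : ∀ i < steps.length, ∀ j < steps.length,
    base * (steps.take i).prod = base * (steps.take j).prod → i = j

/-- The vertex set of a cycle in a Cayley graph. -/
def CGCycle.verts {G : Type*} [Group G] {S : Set G} (C : CGCycle G S) : Set G :=
  {g | ∃ i < C.steps.length, g = C.base * (C.steps.take i).prod}

/-- `(g, g*s)` is an edge of the cycle `C` (traversed in this direction). -/
def CGCycle.hasEdge {G : Type*} [Group G] {S : Set G} (C : CGCycle G S) (g s : G) :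
    Prop :=
  ∃ i < C.steps.length, g = C.base * (C.steps.take i).prod ∧ C.steps[i]? = some s

section Aux
variable {G : Type*} [Group G] {S : Set G}

lemma take_rotate_prod (l : List G) (hl : l.prod = 1) {i : ℕ} (hi : i < l.length)
    {k : ℕ} (hk : k ≤ l.length) :
    ((l.rotate i).take k).prod = ((l.take i).prod)⁻¹ * (l.take ((i + k) % l.length)).prod := by
  have hn : 0 < l.length := lt_of_le_of_lt (Nat.zero_le _) hi
  rw [List.rotate_eq_drop_append_take hi.le, List.take_append]
  by_cases h : k ≤ l.length - i
  · have h0 : k - (List.drop i l).length = 0 := by simp [List.length_drop]; omega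
    rw [h0, List.take_zero, List.append_nil, List.take_drop]
    have hsplit := List.prod_take_mul_prod_drop (List.take (i+k) l) i
    rw [List.take_take, min_eq_left (by omega)] at hsplit
    have hmod : (List.take ((i+k) % l.length) l).prod = (List.take (i+k) l).prod := by
      rcases lt_or_eq_of_le (show i + k ≤ l.length by omega) with h' | h'
      · rw [Nat.mod_eq_of_lt h']
      · rw [h', Nat.mod_self, List.take_zero, List.take_length, List.prod_nil, hl]
    rw [hmod, eq_inv_mul_iff_mul_eq]
    exact hsplit
  · have h1 : List.take k (List.drop i l) = List.drop i l :=
      List.take_of_length_le (by simp [List.length_drop]; omega)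
    have h2 : List.take (k - (List.drop i l).length) (List.take i l)
        = List.take (k - (l.length - i)) l := by
      rw [List.take_take, List.length_drop, min_eq_left (by omega)]
    rw [h1, h2, List.prod_append]
    have hdrop : (List.drop i l).prod = ((List.take i l).prod)⁻¹ := by
      have := List.prod_take_mul_prod_drop l i
      rw [hl] at this
      exact (inv_eq_of_mul_eq_one_right this).symm
    have hmod : (i + k) % l.length = k - (l.length - i) := by
      rw [Nat.mod_eq_sub_mod (by omega), Nat.mod_eq_of_lt (by omega)]
      omega
    rw [hdrop, hmod]

/-- Rotation of a cycle. -/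
def CGCycle.rot (C : CGCycle G S) (i : ℕ) (hi : i < C.steps.length) : CGCycle G S where
  base := C.base * (C.steps.take i).prod
  steps := C.steps.rotate i
  nonempty := by simpa [List.rotate_eq_nil_iff] using C.nonempty
  mem_steps := fun x hx => C.mem_steps x ((C.steps.rotate_perm i).mem_iff.mp hx)
  closed := by
    have hn : 0 < C.steps.length := lt_of_le_of_lt (Nat.zero_le _) hi
    rw [← @List.take_length _ (C.steps.rotate i), List.length_rotate,
      take_rotate_prod C.steps C.closed hi le_rfl]
    rw [Nat.add_mod_right, Nat.mod_eq_of_lt hi]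
    simp
  selfAvoiding := by
    intro a ha b hb h
    have hn : 0 < C.steps.length := lt_of_le_of_lt (Nat.zero_le _) hi
    rw [List.length_rotate] at ha hb
    rw [mul_assoc, mul_assoc, take_rotate_prod C.steps C.closed hi ha.le,
      take_rotate_prod C.steps C.closed hi hb.le, mul_inv_cancel_left,
      mul_inv_cancel_left] at h
    have key := C.selfAvoiding _ (Nat.mod_lt _ hn) _ (Nat.mod_lt _ hn) h
    have h1 : (i + a) % C.steps.length = (i + b) % C.steps.length := key
    have h2 : a % C.steps.length = b % C.steps.length :=
      Nat.ModEq.add_left_cancel' i h1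
    rwa [Nat.mod_eq_of_lt ha, Nat.mod_eq_of_lt hb] at h2

@[simp] lemma CGCycle.rot_base (C : CGCycle G S) (i : ℕ) (hi : i < C.steps.length) :
    (C.rot i hi).base = C.base * (C.steps.take i).prod := rfl

@[simp] lemma CGCycle.rot_steps (C : CGCycle G S) (i : ℕ) (hi : i < C.steps.length) :
    (C.rot i hi).steps = C.steps.rotate i := rfl

lemma CGCycle.rot_partial (C : CGCycle G S) (i : ℕ) (hi : i < C.steps.length)
    {k : ℕ} (hk : k ≤ C.steps.length) :
    (C.rot i hi).base * (((C.rot i hi).steps.take k)).prod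
      = C.base * (C.steps.take ((i + k) % C.steps.length)).prod := by
  rw [rot_base, rot_steps, mul_assoc, take_rotate_prod C.steps C.closed hi hk,
    mul_inv_cancel_left]

lemma CGCycle.rot_verts (C : CGCycle G S) (i : ℕ) (hi : i < C.steps.length) :
    (C.rot i hi).verts = C.verts := by
  have hn : 0 < C.steps.length := lt_of_le_of_lt (Nat.zero_le _) hi
  ext g
  simp only [CGCycle.verts, Set.mem_setOf_eq]
  constructor
  · rintro ⟨k, hk, rfl⟩
    rw [rot_steps, List.length_rotate] at hk
    exact ⟨(i + k) % C.steps.length, Nat.mod_lt _ hn, (C.rot_partial i hi hk.le)⟩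
  · rintro ⟨m, hm, rfl⟩
    refine ⟨(m + C.steps.length - i) % C.steps.length, ?_, ?_⟩
    · rw [rot_steps, List.length_rotate]; exact Nat.mod_lt _ hn
    · rw [C.rot_partial i hi (Nat.mod_lt _ hn).le]
      have hmm : (i + (m + C.steps.length - i) % C.steps.length) % C.steps.length = m := by
        rw [Nat.add_mod_mod]
        have h4 : i + (m + C.steps.length - i) = m + C.steps.length := by omega
        rw [h4, Nat.add_mod_right, Nat.mod_eq_of_lt hm]
      rw [hmm]

end Aux

/-- commutative joining. If `C₁`, `C₂` are vertex-disjoint cycles in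
the Cayley graph `Γ(G,S)`, `r, s ∈ S` commute, `(g₁, g₁s)` is an edge of `C₁`,
`g₂ := g₁r` is a vertex of `C₂` and `(g₂, g₂s)` is an edge of `C₂`, then there is a
cycle in `Γ(G,S)` whose vertex set is exactly the union of those of `C₁` and `C₂`. -/
theorem stmt7 {G : Type*} [Group G] (S : Set G) (hS : Subgroup.closure S = ⊤)
    (C₁ C₂ : CGCycle G S) (hdisj : Disjoint C₁.verts C₂.verts)
    (r s : G) (hr : r ∈ S) (hs : s ∈ S) (hcomm : r * s = s * r)
    (g₁ : G) (h₁ : C₁.hasEdge g₁ s) (h₂v : g₁ * r ∈ C₂.verts)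
    (h₂ : C₂.hasEdge (g₁ * r) s) :
    ∃ C : CGCycle G S, C.verts = C₁.verts ∪ C₂.verts := by
  obtain ⟨i, hi, hg1, hs1⟩ := h₁
  obtain ⟨j, hj, hg2, hs2⟩ := h₂
  set R₁ := C₁.rot i hi with hR₁def
  set R₂ := C₂.rot j hj with hR₂def
  have hb₁ : R₁.base = g₁ := by rw [hR₁def, CGCycle.rot_base, ← hg1]
  have hb₂ : R₂.base = g₁ * r := by rw [hR₂def, CGCycle.rot_base, ← hg2]
  have hv₁ : R₁.verts = C₁.verts := C₁.rot_verts i hi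
  have hv₂ : R₂.verts = C₂.verts := C₂.rot_verts j hj
  -- heads of rotated step lists
  have hhead : ∀ (C : CGCycle G S) (k : ℕ) (hk : k < C.steps.length),
      C.steps[k]? = some s → (C.rot k hk).steps = s :: (C.rot k hk).steps.tail := by
    intro C k hk hsk
    have hlen2 : 0 < (C.steps.rotate k).length := by rw [List.length_rotate]; omega
    have h0 : (C.steps.rotate k)[0]? = some s := by
      rw [List.getElem?_eq_getElem hlen2, List.getElem_rotate]
      rw [List.getElem?_eq_getElem hk] at hsk
      simpa [Nat.mod_eq_of_lt hk] using hsk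
    have h0' : s ∈ (C.rot k hk).steps.head? := by
      rw [CGCycle.rot_steps, List.head?_eq_getElem?]
      exact h0
    exact (List.cons_head?_tail h0').symm
  set T₁ := R₁.steps.tail with hT₁def
  set T₂ := R₂.steps.tail with hT₂def
  have hT₁ : R₁.steps = s :: T₁ := hhead C₁ i hi hs1
  have hT₂ : R₂.steps = s :: T₂ := hhead C₂ j hj hs2
  have hclosed₁ : s * T₁.prod = 1 := by have := R₁.closed; rw [hT₁] at this; simpa using this
  have hclosed₂ : s * T₂.prod = 1 := by have := R₂.closed; rw [hT₂] at this; simpa using this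
  have hprod₁ : T₁.prod = s⁻¹ := (inv_eq_of_mul_eq_one_right hclosed₁).symm
  have hprod₂ : T₂.prod = s⁻¹ := (inv_eq_of_mul_eq_one_right hclosed₂).symm
  have hrs : r * s * r⁻¹ = s := by rw [hcomm]; group
  set M := T₂.reverse.map (fun x => x⁻¹) with hMdef
  have hMlen : M.length = T₂.length := by simp [hMdef]
  set L := r :: (M ++ r⁻¹ :: T₁) with hLdef
  have hLlen : L.length = T₂.length + T₁.length + 2 := by simp [hLdef, hMlen]; omega
  have hlen₁ : R₁.steps.length = T₁.length + 1 := by rw [hT₁]; simp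
  have hlen₂ : R₂.steps.length = T₂.length + 1 := by rw [hT₂]; simp
  have hMtake : ∀ k ≤ T₂.length, (M.take k).prod = ((T₂.drop (T₂.length - k)).prod)⁻¹ := by
    intro k hk
    have h1 : M.take k = ((T₂.drop (T₂.length - k)).map (fun x => x⁻¹)).reverse := by
      rw [hMdef, ← List.map_take, List.take_reverse, List.map_reverse]
    rw [h1, ← List.prod_inv_reverse]
  have hMprod : M.prod = s := by
    rw [hMdef, List.map_reverse, ← List.prod_inv_reverse, hprod₂, inv_inv]
  have hLtakeB : ∀ k ≤ T₂.length,
      (L.take (k+1)).prod = r * ((T₂.drop (T₂.length - k)).prod)⁻¹ := by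
    intro k hk
    have h1 : L.take (k+1) = r :: M.take k := by
      rw [hLdef, List.take_succ_cons, List.take_append,
        Nat.sub_eq_zero_of_le (hMlen ▸ hk), List.take_zero, List.append_nil]
    rw [h1, List.prod_cons, hMtake k hk]
  have hLtakeD : ∀ k ≤ T₁.length,
      (L.take (T₂.length + 2 + k)).prod = s * (T₁.take k).prod := by
    intro k hk
    have h1 : L.take (T₂.length + 2 + k) = r :: (M ++ r⁻¹ :: T₁.take k) := by
      rw [hLdef, show T₂.length + 2 + k = (T₂.length + 1 + k) + 1 by omega,
        List.take_succ_cons, List.take_append,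
        List.take_of_length_le (by omega), hMlen,
        show T₂.length + 1 + k - T₂.length = k + 1 by omega, List.take_succ_cons]
    rw [h1, List.prod_cons, List.prod_append, List.prod_cons, hMprod]
    have h2 : r * (s * (r⁻¹ * (T₁.take k).prod)) = (r * s * r⁻¹) * (T₁.take k).prod := by
      group
    rw [h2, hrs]
  have hd2 : ∀ d ≤ T₂.length, ((T₂.drop d).prod)⁻¹ = s * (T₂.take d).prod := by
    intro d _
    have h5 : (T₂.take d).prod * (T₂.drop d).prod = s⁻¹ := by
      rw [List.prod_take_mul_prod_drop, hprod₂]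
    have h6 : (s * (T₂.take d).prod) * (T₂.drop d).prod = 1 := by
      rw [mul_assoc, h5]; simp
    exact (eq_inv_of_mul_eq_one_left h6).symm
  have hVB : ∀ k, 1 ≤ k → k ≤ T₂.length →
      g₁ * (L.take (k+1)).prod = R₂.base * (R₂.steps.take (T₂.length + 1 - k)).prod := by
    intro k h1k hk
    rw [hLtakeB k hk, hb₂, hT₂, show T₂.length + 1 - k = (T₂.length - k) + 1 by omega,
      List.take_succ_cons, List.prod_cons, hd2 (T₂.length - k) (by omega)]
    simp [mul_assoc]
  have hVB0 : g₁ * (L.take 1).prod = R₂.base * (R₂.steps.take 0).prod := by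
    simp [hLdef, hb₂]
  have hV0 : g₁ * (L.take 0).prod = R₁.base * (R₁.steps.take 0).prod := by simp [hb₁]
  have hVD : ∀ k ≤ T₁.length,
      g₁ * (L.take (T₂.length + 2 + k)).prod = R₁.base * (R₁.steps.take (k+1)).prod := by
    intro k hk
    rw [hLtakeD k hk, hb₁, hT₁, List.take_succ_cons, List.prod_cons]
  have haveA : ∀ k < L.length, (k = 0 ∨ T₂.length + 2 ≤ k) →
      ∃ m < T₁.length + 1, ((m = 0 ∧ k = 0) ∨ (1 ≤ m ∧ k = m + T₂.length + 1)) ∧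
        g₁ * (L.take k).prod = R₁.base * (R₁.steps.take m).prod := by
    intro k hkN hcase
    rw [hLlen] at hkN
    rcases hcase with rfl | hge
    · exact ⟨0, by omega, Or.inl ⟨rfl, rfl⟩, hV0⟩
    · refine ⟨k - (T₂.length + 1), by omega, Or.inr ⟨by omega, by omega⟩, ?_⟩
      have h7 := hVD (k - (T₂.length + 2)) (by omega)
      rw [show T₂.length + 2 + (k - (T₂.length + 2)) = k by omega,
        show k - (T₂.length + 2) + 1 = k - (T₂.length + 1) by omega] at h7
      exact h7
  have haveB : ∀ k, 1 ≤ k → k ≤ T₂.length + 1 →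
      ∃ m < T₂.length + 1, (T₂.length + 1 - m) % (T₂.length + 1) = k - 1 ∧
        g₁ * (L.take k).prod = R₂.base * (R₂.steps.take m).prod := by
    intro k h1 h2
    rcases eq_or_lt_of_le h1 with h | h
    · refine ⟨0, by omega, ?_, by rw [← h]; exact hVB0⟩
      rw [Nat.sub_zero, Nat.mod_self]; omega
    · refine ⟨T₂.length + 1 - (k - 1), by omega, ?_, ?_⟩
      · rw [show T₂.length + 1 - (T₂.length + 1 - (k - 1)) = k - 1 by omega,
          Nat.mod_eq_of_lt (by omega)]
      · have h7 := hVB (k - 1) (by omega) (by omega)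
        rw [show k - 1 + 1 = k by omega] at h7
        exact h7
  have hmemA : ∀ {c}, c < L.length → (c = 0 ∨ T₂.length + 2 ≤ c) →
      g₁ * (L.take c).prod ∈ C₁.verts := by
    intro c hcN hc
    obtain ⟨m, hm, -, he⟩ := haveA c hcN hc
    rw [he, ← hv₁]
    exact ⟨m, by omega, rfl⟩
  have hmemB : ∀ {c}, 1 ≤ c → c ≤ T₂.length + 1 → g₁ * (L.take c).prod ∈ C₂.verts := by
    intro c h1 h2
    obtain ⟨m, hm, -, he⟩ := haveB c h1 h2
    rw [he, ← hv₂]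
    exact ⟨m, by omega, rfl⟩
  have hmem : ∀ x ∈ L, x ∈ S ∨ x⁻¹ ∈ S := by
    intro x hx
    rw [hLdef] at hx
    simp only [List.mem_cons, List.mem_append, hMdef, List.mem_map, List.mem_reverse] at hx
    rcases hx with rfl | ⟨y, hy, rfl⟩ | rfl | hx
    · exact Or.inl hr
    · rcases R₂.mem_steps y (by rw [hT₂]; exact List.mem_cons_of_mem _ hy) with h | h
      · exact Or.inr (by simpa using h)
      · exact Or.inl h
    · exact Or.inr (by simpa using hr)
    · exact R₁.mem_steps x (by rw [hT₁]; exact List.mem_cons_of_mem _ hx)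
  have hLclosed : L.prod = 1 := by
    rw [hLdef, List.prod_cons, List.prod_append, hMprod, List.prod_cons, hprod₁]
    have h2 : r * (s * (r⁻¹ * s⁻¹)) = (r * s * r⁻¹) * s⁻¹ := by group
    rw [h2, hrs]; simp
  have hSA : ∀ a < L.length, ∀ b < L.length,
      g₁ * (L.take a).prod = g₁ * (L.take b).prod → a = b := by
    intro a ha b hb h
    have hcl : ∀ c, c < L.length → (c = 0 ∨ T₂.length + 2 ≤ c) ∨ (1 ≤ c ∧ c ≤ T₂.length + 1) := by
      intro c hc; rw [hLlen] at hc; omega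
    rcases hcl a ha with hA | hB <;> rcases hcl b hb with hA' | hB'
    · obtain ⟨ma, hma, hka, hea⟩ := haveA a ha hA
      obtain ⟨mb, hmb, hkb, heb⟩ := haveA b hb hA'
      rw [hea, heb] at h
      have hmm := R₁.selfAvoiding ma (by omega) mb (by omega) h
      rcases hka with ⟨u1, u2⟩ | ⟨u1, u2⟩ <;> rcases hkb with ⟨v1, v2⟩ | ⟨v1, v2⟩ <;> omega
    · have hy1 : g₁ * (L.take b).prod ∈ C₂.verts := hmemB hB'.1 hB'.2
      have hy2 : g₁ * (L.take a).prod ∈ C₁.verts := hmemA ha hA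
      rw [h] at hy2
      exact absurd hy1 (Set.disjoint_left.mp hdisj hy2)
    · have hy1 : g₁ * (L.take a).prod ∈ C₂.verts := hmemB hB.1 hB.2
      have hy2 : g₁ * (L.take b).prod ∈ C₁.verts := hmemA hb hA'
      rw [← h] at hy2
      exact absurd hy1 (Set.disjoint_left.mp hdisj hy2)
    · obtain ⟨ma, hma, hka, hea⟩ := haveB a hB.1 hB.2
      obtain ⟨mb, hmb, hkb, heb⟩ := haveB b hB'.1 hB'.2
      rw [hea, heb] at h
      have hmm := R₂.selfAvoiding ma (by omega) mb (by omega) h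
      rw [hmm] at hka
      omega
  refine ⟨⟨g₁, L, by simp [hLdef], hmem, hLclosed, hSA⟩, ?_⟩
  ext g
  constructor
  · rintro ⟨k, hk, rfl⟩
    have hk' : k < T₂.length + T₁.length + 2 := by rw [← hLlen]; exact hk
    rcases (by omega : (k = 0 ∨ T₂.length + 2 ≤ k) ∨ (1 ≤ k ∧ k ≤ T₂.length + 1)) with hA | hB
    · exact Set.mem_union_left _ (hmemA hk hA)
    · exact Set.mem_union_right _ (hmemB hB.1 hB.2)
  · intro hg
    show ∃ k < L.length, g = g₁ * (L.take k).prod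
    rcases hg with hg | hg
    · rw [← hv₁] at hg
      obtain ⟨m, hm, rfl⟩ := hg
      rw [hlen₁] at hm
      rcases Nat.eq_zero_or_pos m with rfl | hmpos
      · exact ⟨0, by rw [hLlen]; omega, hV0.symm⟩
      · refine ⟨T₂.length + 2 + (m - 1), by rw [hLlen]; omega, ?_⟩
        have h7 := hVD (m - 1) (by omega)
        rw [show m - 1 + 1 = m by omega] at h7
        exact h7.symm
    · rw [← hv₂] at hg
      obtain ⟨m, hm, rfl⟩ := hg
      rw [hlen₂] at hm
      rcases Nat.eq_zero_or_pos m with rfl | hmpos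
      · exact ⟨1, by rw [hLlen]; omega, hVB0.symm⟩
      · refine ⟨(T₂.length + 1 - m) + 1, by rw [hLlen]; omega, ?_⟩
        have h7 := hVB (T₂.length + 1 - m) (by omega) (by omega)
        rw [show T₂.length + 1 - (T₂.length + 1 - m) = m by omega] at h7
        exact h7.symm
end

section
/- Let G be a finite group with generating set S = {r_1,...,r_n} where r_n has order two, and let H = ⟨r_1,...,r_{n-1}⟩. If the Cayley graph Γ(H, {r_1,...,r_{n-1}}) has a Hamiltonian cycle C_H such that whenever s, t are consecutive edge labels in C_H, at least one of s, t commutes with r_n, then Γ(G, S) has a Hamiltonian cycle. -/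
namespace Stmt8
set_option linter.unusedSectionVars false
variable {G : Type*} [Group G]

def Estep : G × G → G × G → Prop := fun p q => q.1 = p.1 * p.2

def Wrap (R : G × G → G × G → Prop) (el : List (G × G)) : Prop :=
  ∀ p ∈ el.getLast?, ∀ q ∈ el.head?, R p q

def CPair (R : G × G → G × G → Prop) (el : List (G × G)) : Prop :=
  el.IsChain R ∧ Wrap R el

def vset (el : List (G × G)) : Set G := {x | x ∈ el.map Prod.fst}

theorem mem_vset {el : List (G × G)} {x : G} : x ∈ vset el ↔ ∃ p ∈ el, p.1 = x := by
  simp [vset]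

theorem vset_append {A B : List (G × G)} : vset (A ++ B) = vset A ∪ vset B := by
  ext x; simp [vset, or_comm]

theorem vset_rotate {A B : List (G × G)} : vset (A ++ B) = vset (B ++ A) := by
  rw [vset_append, vset_append, Set.union_comm]

theorem getLast?_append_right {α : Type*} {A B : List α} (h : B ≠ []) :
    (A ++ B).getLast? = B.getLast? := by
  rw [List.getLast?_append]
  cases hB : B.getLast? with
  | none => exact absurd (List.getLast?_eq_none_iff.mp hB) h
  | some b => rfl

theorem head?_append_left {α : Type*} {A B : List α} (h : A ≠ []) :
    (A ++ B).head? = A.head? := by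
  rw [List.head?_append]
  cases hA : A.head? with
  | none => exact absurd (List.head?_eq_none_iff.mp hA) h
  | some b => rfl

theorem CPair.mono {R R' : G × G → G × G → Prop} {el : List (G × G)}
    (h : ∀ p q, R p q → R' p q) (hc : CPair R el) : CPair R' el :=
  ⟨List.IsChain.imp h hc.1, fun p hp q hq => h _ _ (hc.2 p hp q hq)⟩

theorem CPair.rotate {R : G × G → G × G → Prop} {A B : List (G × G)}
    (h : CPair R (A ++ B)) : CPair R (B ++ A) := by
  rcases eq_or_ne A [] with rfl | hA
  · simpa using h
  rcases eq_or_ne B [] with rfl | hB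
  · simpa using h
  obtain ⟨hc, hw⟩ := h
  rw [List.isChain_append] at hc
  obtain ⟨hcA, hcB, hj⟩ := hc
  have hw' : ∀ p ∈ B.getLast?, ∀ q ∈ A.head?, R p q := by
    intro p hp q hq
    exact hw p (by rw [getLast?_append_right hB]; exact hp)
      q (by rw [head?_append_left hA]; exact hq)
  constructor
  · rw [List.isChain_append]
    exact ⟨hcB, hcA, hw'⟩
  · intro p hp q hq
    rw [getLast?_append_right hA] at hp
    rw [head?_append_left hB] at hq
    exact hj p hp q hq

theorem chain'_rel_concat_cons {R : G × G → G × G → Prop} {A B : List (G × G)} {q p : G × G}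
    (h : List.IsChain R ((A ++ [q]) ++ p :: B)) : R q p := by
  rw [List.isChain_append] at h
  exact h.2.2 q (by simp) p (by simp)

/-- vertex at position `k` equals base times prefix product of labels. -/
theorem fst_getElem {el : List (G × G)} (hc : el.IsChain Estep) (k : ℕ) (hk : k < el.length)
    (h0 : 0 < el.length) :
    el[k].1 = el[0].1 * ((el.map Prod.snd).take k).prod := by
  induction k with
  | zero => simp
  | succ k ih =>
    have hk' : k < el.length := Nat.lt_of_succ_lt hk
    have step : el[k + 1].1 = el[k].1 * el[k].2 := by
      have := List.isChain_iff_getElem.mp hc k (by omega)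
      simpa [Estep, List.get_eq_getElem] using this
    rw [step, ih hk', List.prod_take_succ _ k (by simpa using hk'), List.getElem_map,
      mul_assoc]

def edgesOf (b : G) : List G → List (G × G)
  | [] => []
  | s :: P => (b, s) :: edgesOf (b * s) P

@[simp] theorem edgesOf_nil (b : G) : edgesOf b ([] : List G) = [] := rfl
@[simp] theorem edgesOf_cons (b s : G) (P : List G) :
    edgesOf b (s :: P) = (b, s) :: edgesOf (b * s) P := rfl

theorem length_edgesOf (b : G) (P : List G) : (edgesOf b P).length = P.length := by
  induction P generalizing b with
  | nil => rfl
  | cons s P ih => simp [ih]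

theorem map_snd_edgesOf (b : G) (P : List G) : (edgesOf b P).map Prod.snd = P := by
  induction P generalizing b with
  | nil => rfl
  | cons s P ih => simp [ih]

theorem map_fst_edgesOf (b : G) (P : List G) :
    (edgesOf b P).map Prod.fst = (List.range P.length).map fun k => b * (P.take k).prod := by
  induction P generalizing b with
  | nil => rfl
  | cons s P ih =>
    simp only [edgesOf_cons, List.map_cons, ih, List.length_cons, List.range_succ_eq_map,
      List.map_map]
    congr 1
    · simp
    · apply List.map_congr_left
      intro k _
      simp [List.take_succ_cons, mul_assoc]

theorem chain'_edgesOf (b : G) (P : List G) : (edgesOf b P).IsChain Estep := by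
  induction P generalizing b with
  | nil => simp
  | cons s P ih =>
    rw [edgesOf_cons, List.isChain_cons]
    refine ⟨?_, ih (b * s)⟩
    intro q hq
    cases P with
    | nil => simp at hq
    | cons t P' => simp at hq; subst hq; rfl

theorem head?_fst_edgesOf (b : G) (P : List G) :
    ∀ q ∈ (edgesOf b P).head?, q.1 = b := by
  cases P with
  | nil => simp
  | cons s P => intro q hq; simp at hq; subst hq; rfl

theorem getLast?_edgesOf (b : G) (P : List G) :
    ∀ q ∈ (edgesOf b P).getLast?, q.1 * q.2 = b * P.prod := by
  induction P generalizing b with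
  | nil => simp
  | cons s P ih =>
    intro q hq
    cases P with
    | nil => simp at hq ⊢; subst hq; rfl
    | cons t P' =>
      have hq' : q ∈ (edgesOf (b * s) (t :: P')).getLast? := by
        simp only [edgesOf_cons] at hq ⊢
        rwa [List.getLast?_cons_cons] at hq
      have := ih (b * s) q hq'
      simpa [mul_assoc] using this

/-- the list of edge targets is a permutation of the list of sources, for a closed chain. -/
theorem targets_perm {el : List (G × G)} (hc : el.IsChain Estep) (hw : Wrap Estep el) :
    (el.map fun q => q.1 * q.2).Perm (el.map Prod.fst) := by
  cases el with
  | nil => simp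
  | cons p rest =>
    have aux : ∀ (rest : List (G × G)) (p : G × G), (p :: rest).IsChain Estep →
        ((p :: rest).map fun q => q.1 * q.2) =
          rest.map Prod.fst ++ [((p :: rest).getLast (by simp)).1 *
            ((p :: rest).getLast (by simp)).2] := by
      intro rest
      induction rest with
      | nil => intro p _; simp
      | cons q rest ih =>
        intro p hch
        rw [List.isChain_cons_cons] at hch
        have h1 := ih q hch.2
        simp only [List.map_cons] at h1 ⊢
        rw [h1]
        have : q.1 = p.1 * p.2 := hch.1
        simp [this, List.getLast_cons]
    have h1 := aux rest p hc
    rw [h1]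
    have hlast : ((p :: rest).getLast (by simp)).1 * ((p :: rest).getLast (by simp)).2 = p.1 := by
      have := hw ((p :: rest).getLast (by simp)) (by
        rw [List.getLast?_eq_getLast (l := p :: rest) (by simp)]; rfl) p (by simp)
      exact this.symm
    rw [hlast]
    exact (List.perm_append_singleton _ _).trans (by simp [List.Perm.refl])


section Param
variable (a : G) (H : Subgroup G) (LL : List G)

def InL (x : G) : Prop := x ∈ LL ∨ x⁻¹ ∈ LL

theorem InL.inv {LL : List G} {x : G} (h : InL LL x) : InL LL x⁻¹ := by
  rcases h with h | h
  · exact Or.inr (by simpa using h)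
  · exact Or.inl h

def Cm (x : G) : Prop := x ∈ H ∧ InL LL x ∧ Commute x a

theorem Cm.inv {a : G} {H : Subgroup G} {LL : List G} {x : G} (h : Cm a H LL x) :
    Cm a H LL x⁻¹ :=
  ⟨inv_mem h.1, h.2.1.inv, h.2.2.inv_left⟩

def CmRel (p q : G × G) : Prop := Cm a H LL p.2 ∨ Cm a H LL q.2

def Bd (V : Set G) (p q : G × G) : Prop := q.1 * a ∈ V ∨ CmRel a H LL p q

/-- Hamiltonian cycle data on the subgroup `H`. -/
structure HC (el : List (G × G)) : Prop where
  ne : el ≠ []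
  chain : CPair Estep el
  nodup : (el.map Prod.fst).Nodup
  labels : ∀ p ∈ el, p.2 ∈ H ∧ InL LL p.2
  verts : ∀ p ∈ el, p.1 ∈ H
  cover : ∀ g : G, g ∈ H → g ∈ vset el
  comm : CPair (CmRel a H LL) el

/-- Invariant for the partial Hamiltonian cycle in `G`. -/
structure GoodC (el : List (G × G)) : Prop where
  ne : el ≠ []
  chain : CPair Estep el
  nodup : (el.map Prod.fst).Nodup
  labels : ∀ p ∈ el, p.2 = a ∨ (p.2 ∈ H ∧ InL LL p.2)
  coset : ∀ p ∈ el, ∀ h : G, h ∈ H → p.1 * h ∈ vset el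
  bd : CPair (Bd a H LL (vset el)) el

variable {a H LL}

theorem HC.rotate {A B : List (G × G)} (h : HC a H LL (A ++ B)) : HC a H LL (B ++ A) where
  ne := by
    intro hBA
    rcases List.append_eq_nil_iff.mp hBA with ⟨rfl, rfl⟩
    exact h.ne rfl
  chain := h.chain.rotate
  nodup := by
    have : ((A ++ B).map Prod.fst).Perm ((B ++ A).map Prod.fst) := by
      simp only [List.map_append]
      exact List.perm_append_comm
    exact this.nodup_iff.mp h.nodup
  labels := fun p hp => h.labels p (by simp at hp ⊢; tauto)
  verts := fun p hp => h.verts p (by simp at hp ⊢; tauto)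
  cover := fun g hg => by rw [← vset_rotate]; exact h.cover g hg
  comm := h.comm.rotate

theorem GoodC.rotate {A B : List (G × G)} (h : GoodC a H LL (A ++ B)) :
    GoodC a H LL (B ++ A) where
  ne := by
    intro hBA
    rcases List.append_eq_nil_iff.mp hBA with ⟨rfl, rfl⟩
    exact h.ne rfl
  chain := h.chain.rotate
  nodup := by
    have : ((A ++ B).map Prod.fst).Perm ((B ++ A).map Prod.fst) := by
      simp only [List.map_append]
      exact List.perm_append_comm
    exact this.nodup_iff.mp h.nodup
  labels := fun p hp => h.labels p (by simp at hp ⊢; tauto)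
  coset := fun p hp h' hh' => by
    rw [← vset_rotate]
    exact h.coset p (by simp at hp ⊢; tauto) h' hh'
  bd := by
    have := h.bd.rotate
    refine this.mono ?_
    intro p q hpq
    rcases hpq with h1 | h2
    · exact Or.inl (by rwa [← vset_rotate])
    · exact Or.inr h2

def revEl (el : List (G × G)) : List (G × G) :=
  (el.map fun q => (q.1 * q.2, q.2⁻¹)).reverse

theorem map_fst_revEl (el : List (G × G)) :
    (revEl el).map Prod.fst = (el.map fun q => q.1 * q.2).reverse := by
  simp [revEl, List.map_reverse, List.map_map]

theorem map_snd_revEl (el : List (G × G)) :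
    (revEl el).map Prod.snd = (el.map fun q => q.2⁻¹).reverse := by
  simp [revEl, List.map_reverse, List.map_map]

theorem HC.rev {el : List (G × G)} (h : HC a H LL el) : HC a H LL (revEl el) where
  ne := by
    intro hc
    apply h.ne
    have : el.map (fun q => (q.1 * q.2, q.2⁻¹)) = [] := by
      rw [← List.reverse_reverse (el.map _)]; rw [revEl] at hc; rw [hc]; rfl
    simpa using this
  chain := by
    obtain ⟨hc, hw⟩ := h.chain
    constructor
    · rw [revEl, List.isChain_reverse, List.isChain_map]
      refine hc.imp ?_
      intro p q hpq
      simp only [flip, Estep] at hpq ⊢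
      rw [hpq, mul_inv_cancel_right]
    · intro p hp q hq
      rw [revEl, List.getLast?_reverse, List.head?_map] at hp
      rw [revEl, List.head?_reverse, List.getLast?_map] at hq
      cases hel : el.head? with
      | none => rw [hel] at hp; simp at hp
      | some ph =>
        rw [hel] at hp; simp at hp
        cases hel2 : el.getLast? with
        | none => rw [hel2] at hq; simp at hq
        | some pl =>
          rw [hel2] at hq; simp at hq
          subst hp; subst hq
          have := hw pl (by rw [hel2]; rfl) ph (by rw [hel]; rfl)
          simp only [Estep] at this ⊢
          rw [this, mul_inv_cancel_right]
  nodup := by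
    rw [map_fst_revEl, List.nodup_reverse]
    exact ((targets_perm h.chain.1 h.chain.2).nodup_iff).mpr h.nodup
  labels := by
    intro p hp
    rw [revEl, List.mem_reverse, List.mem_map] at hp
    obtain ⟨q, hq, rfl⟩ := hp
    exact ⟨inv_mem (h.labels q hq).1, (h.labels q hq).2.inv⟩
  verts := by
    intro p hp
    rw [revEl, List.mem_reverse, List.mem_map] at hp
    obtain ⟨q, hq, rfl⟩ := hp
    exact mul_mem (h.verts q hq) (h.labels q hq).1
  cover := by
    intro g hg
    have := h.cover g hg
    rw [mem_vset] at this ⊢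
    obtain ⟨p, hp, rfl⟩ := this
    have : p.1 ∈ (revEl el).map Prod.fst := by
      rw [map_fst_revEl, List.mem_reverse]
      have : (el.map fun q => q.1 * q.2).Perm (el.map Prod.fst) :=
        targets_perm h.chain.1 h.chain.2
      exact this.mem_iff.mpr (List.mem_map_of_mem hp)
    rw [List.mem_map] at this
    obtain ⟨q, hq, hq2⟩ := this
    exact ⟨q, hq, hq2⟩
  comm := by
    obtain ⟨hc, hw⟩ := h.comm
    constructor
    · rw [revEl, List.isChain_reverse, List.isChain_map]
      refine hc.imp ?_
      intro p q hpq
      simp only [flip, CmRel] at hpq ⊢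
      rcases hpq with h1 | h1
      · exact Or.inr h1.inv
      · exact Or.inl h1.inv
    · intro p hp q hq
      rw [revEl, List.getLast?_reverse, List.head?_map] at hp
      rw [revEl, List.head?_reverse, List.getLast?_map] at hq
      cases hel : el.head? with
      | none => rw [hel] at hp; simp at hp
      | some ph =>
        rw [hel] at hp; simp at hp
        cases hel2 : el.getLast? with
        | none => rw [hel2] at hq; simp at hq
        | some pl =>
          rw [hel2] at hq; simp at hq
          subst hp; subst hq
          have := hw pl (by rw [hel2]; rfl) ph (by rw [hel]; rfl)
          simp only [CmRel] at this ⊢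
          rcases this with h1 | h1
          · exact Or.inr h1.inv
          · exact Or.inl h1.inv

theorem hc_exists {el0 : List (G × G)} (h0 : HC a H LL el0)
    (hLL : el0.map Prod.snd = LL) (s : G) (hs : InL LL s) :
    ∃ v0 tail, HC a H LL ((v0, s⁻¹) :: tail) := by
  have key : ∀ (el : List (G × G)), HC a H LL el → s⁻¹ ∈ el.map Prod.snd →
      ∃ v0 tail, HC a H LL ((v0, s⁻¹) :: tail) := by
    intro el hel hmem
    rw [List.mem_map] at hmem
    obtain ⟨p, hp, hps⟩ := hmem
    obtain ⟨A, B, rfl⟩ := List.append_of_mem hp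
    have := hel.rotate (A := A) (B := p :: B)
    rw [List.cons_append] at this
    refine ⟨p.1, B ++ A, ?_⟩
    have hpe : p = (p.1, s⁻¹) := by rw [← hps]
    rwa [← hpe]
  rcases hs with hs | hs
  · -- s ∈ LL : use reversed cycle
    apply key (revEl el0) h0.rev
    rw [map_snd_revEl, List.mem_reverse, List.mem_map]
    rw [← hLL, List.mem_map] at hs
    obtain ⟨p, hp, hps⟩ := hs
    exact ⟨p, hp, by rw [hps]⟩
  · -- s⁻¹ ∈ LL
    exact key el0 h0 (by rwa [hLL])


theorem expand (ha2 : a * a = 1) {el0 : List (G × G)} (h0 : HC a H LL el0)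
    (hLL : el0.map Prod.snd = LL) {el A : List (G × G)} {u s : G}
    (hel : GoodC a H LL el) (hsp : el = A ++ [(u, s)])
    (hsH : s ∈ H) (hsL : InL LL s) (hsc : Commute s a) (hua : u * a ∉ vset el) :
    ∃ el', GoodC a H LL el' ∧ el.length < el'.length := by
  obtain ⟨v0, tail, hlc⟩ := hc_exists h0 hLL s hsL
  set c := u * a with hc_def
  set v1 := v0 * s⁻¹ with hv1_def
  set φ : G × G → G × G := fun p => (c * v1⁻¹ * p.1, p.2) with hφ
  set E := tail.map φ with hE
  set el' := A ++ (u, a) :: (E ++ [(c * s, a)]) with hel'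
  -- basic facts
  have hv0H : v0 ∈ H := hlc.verts (v0, s⁻¹) List.mem_cons_self
  have hsiH : s⁻¹ ∈ H := inv_mem hsH
  have hv1H : v1 ∈ H := mul_mem hv0H hsiH
  have hv1inv : v1⁻¹ * v0 = s := by rw [hv1_def]; group
  have hca : c * a = u := by rw [hc_def, mul_assoc, ha2, mul_one]
  have hcsa : c * s * a = u * s := by
    simp only [hc_def, mul_assoc]
    rw [hsc.eq, ← mul_assoc a a s, ha2, one_mul]
  have husa : u * s * a = c * s := by
    rw [mul_assoc, hsc.eq, ← mul_assoc, hc_def]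
  -- facts about lc
  have hlc_last : ∀ q ∈ ((v0, s⁻¹) :: tail).getLast?, q.1 * q.2 = v0 := by
    intro q hq
    have := hlc.chain.2 q hq (v0, s⁻¹) (by simp)
    simpa [Estep] using this.symm
  have htail_last : tail ≠ [] → ∀ q ∈ tail.getLast?, q.1 * q.2 = v0 := by
    intro htne q hq
    apply hlc_last
    have : ((v0, s⁻¹) :: tail) = [(v0, s⁻¹)] ++ tail := by simp
    rw [this, getLast?_append_right htne]
    exact hq
  have htail_head : ∀ q ∈ tail.head?, q.1 = v1 := by
    intro q hq
    have hch := hlc.chain.1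
    rw [List.isChain_cons] at hch
    have := hch.1 q hq
    simpa [Estep, hv1_def] using this
  have htail0 : tail = [] → s = 1 := by
    intro ht
    subst ht
    have := hlc_last (v0, s⁻¹) (by simp)
    simp only at this
    have hs1 : s⁻¹ = 1 := by
      have := mul_left_cancel (a := v0) (b := s⁻¹) (c := 1) (by rw [mul_one]; exact this)
      exact this
    rw [← inv_inv s, hs1, inv_one]
  -- facts about el
  have hne : el ≠ [] := hel.ne
  have hus_mem : (u, s) ∈ el := by rw [hsp]; simp
  have huV : u ∈ vset el := mem_vset.mpr ⟨(u, s), hus_mem, rfl⟩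
  have hlast_el : el.getLast? = some (u, s) := by
    rw [hsp, getLast?_append_right (by simp)]; rfl
  have hhead_fst : ∀ q ∈ el.head?, q.1 = u * s := by
    intro q hq
    have := hel.chain.2 (u, s) (by rw [hlast_el]; rfl) q hq
    simpa [Estep] using this
  have husV : u * s ∈ vset el := by
    cases hh : el.head? with
    | none => exact absurd (List.head?_eq_none_iff.mp hh) hne
    | some q =>
      have hq1 := hhead_fst q (by rw [hh]; rfl)
      exact mem_vset.mpr ⟨q, List.mem_of_mem_head? (by rw [hh]; rfl), hq1⟩
  have hcoset_el : ∀ x ∈ vset el, ∀ h : G, h ∈ H → x * h ∈ vset el := by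
    intro x hx h hh
    rw [mem_vset] at hx
    obtain ⟨p, hp, rfl⟩ := hx
    exact hel.coset p hp h hh
  have hdisj : ∀ h : G, h ∈ H → c * h ∉ vset el := by
    intro h hh hmem
    have h2 := hcoset_el _ hmem h⁻¹ (inv_mem hh)
    rw [mul_assoc, mul_inv_cancel, mul_one] at h2
    exact hua h2
  -- new vertex membership
  have hEmem : ∀ p ∈ tail, φ p ∈ el' := by
    intro p hp
    rw [hel']
    exact List.mem_append_right _ (List.mem_cons_of_mem _
      (List.mem_append_left _ (List.mem_map_of_mem (f := φ) hp)))
  have hcs_mem : (c * s, a) ∈ el' := by rw [hel']; simp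
  have hua_mem : (u, a) ∈ el' := by rw [hel']; simp
  have hnewV : ∀ h : G, h ∈ H → c * h ∈ vset el' := by
    intro h hh
    have hg : v1 * h ∈ H := mul_mem hv1H hh
    have hcov := hlc.cover (v1 * h) hg
    rw [mem_vset] at hcov
    obtain ⟨p, hp, hpe⟩ := hcov
    rcases List.mem_cons.mp hp with heq | hptail
    · have hv0e : v0 = v1 * h := by rw [heq] at hpe; exact hpe
      have hhs : h = s := by
        rw [← hv1inv, hv0e, ← mul_assoc, inv_mul_cancel, one_mul]
      rw [hhs]
      exact mem_vset.mpr ⟨(c * s, a), hcs_mem, rfl⟩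
    · refine mem_vset.mpr ⟨φ p, hEmem p hptail, ?_⟩
      show c * v1⁻¹ * p.1 = c * h
      rw [hpe, ← mul_assoc, mul_assoc c v1⁻¹ v1, inv_mul_cancel, mul_one]
  have hVsub : vset el ⊆ vset el' := by
    intro x hx
    rw [mem_vset] at hx
    obtain ⟨p, hp, rfl⟩ := hx
    rw [hsp] at hp
    rcases List.mem_append.mp hp with hpA | hpu
    · exact mem_vset.mpr ⟨p, by rw [hel']; exact List.mem_append_left _ hpA, rfl⟩
    · simp at hpu
      rw [hpu]
      exact mem_vset.mpr ⟨(u, a), hua_mem, rfl⟩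
  have hcV' : c ∈ vset el' := by
    have := hnewV 1 (one_mem H)
    rwa [mul_one] at this
  have huV' : u ∈ vset el' := hVsub huV
  have husV' : u * s ∈ vset el' := hVsub husV
  have hcsV' : c * s ∈ vset el' := hnewV s hsH
  -- junction from A
  have hA_junction : ∀ x ∈ A.getLast?, u = x.1 * x.2 := by
    intro x hx
    have hch := hel.chain.1
    rw [hsp, List.isChain_append] at hch
    exact hch.2.2 x hx (u, s) (by simp)
  have hEne : tail ≠ [] → E ≠ [] := by
    intro h1 h2
    rw [hE] at h2
    exact h1 (List.map_eq_nil_iff.mp h2)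
  have hE_head : ∀ q ∈ E.head?, q.1 = c := by
    intro q hq
    rw [hE, List.head?_map] at hq
    cases ht : tail.head? with
    | none => rw [ht] at hq; simp at hq
    | some t =>
      rw [ht] at hq
      simp at hq
      rw [← hq]
      show c * v1⁻¹ * t.1 = c
      rw [htail_head t (by rw [ht]; rfl), mul_assoc, inv_mul_cancel, mul_one]
  have hE_last : ∀ q ∈ E.getLast?, q.1 * q.2 = c * s := by
    intro q hq
    rw [hE, List.getLast?_map] at hq
    cases ht : tail.getLast? with
    | none => rw [ht] at hq; simp at hq
    | some t =>
      rw [ht] at hq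
      simp at hq
      have htne : tail ≠ [] := by
        intro h1; rw [h1] at ht; simp at ht
      have := htail_last htne t (by rw [ht]; rfl)
      rw [← hq]
      show c * v1⁻¹ * t.1 * t.2 = c * s
      rw [mul_assoc (c * v1⁻¹) t.1 t.2, this, mul_assoc, hv1inv]
  have hlast_el' : el'.getLast? = some (c * s, a) := by
    rw [hel', getLast?_append_right (by simp)]
    have : ((u, a) :: (E ++ [(c * s, a)])) = [(u, a)] ++ (E ++ [(c * s, a)]) := by simp
    rw [this, getLast?_append_right (by simp), getLast?_append_right (by simp)]
    rfl
  -- chain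
  have hchA : List.IsChain Estep A := by
    have hch := hel.chain.1
    rw [hsp, List.isChain_append] at hch
    exact hch.1
  have hch1 : List.IsChain Estep el' := by
    rw [hel', List.isChain_append]
    refine ⟨hchA, ?_, ?_⟩
    · rw [List.isChain_cons]
      constructor
      · intro q hq
        rcases eq_or_ne tail [] with htl | htne
        · have hE0 : E = [] := by rw [hE, htl]; rfl
          rw [hE0] at hq
          simp at hq
          subst hq
          show c * s = (u, a).1 * (u, a).2
          show c * s = u * a
          rw [htail0 htl, mul_one, hc_def]
        · rw [head?_append_left (hEne htne)] at hq
          show q.1 = (u, a).1 * (u, a).2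
          rw [hE_head q hq, hc_def]
      · rw [List.isChain_append]
        refine ⟨?_, by simp, ?_⟩
        · rw [hE, List.isChain_map]
          have htc : List.IsChain Estep tail := hlc.chain.1.tail
          refine htc.imp ?_
          intro p q hpq
          show (φ q).1 = (φ p).1 * (φ p).2
          show c * v1⁻¹ * q.1 = c * v1⁻¹ * p.1 * p.2
          rw [hpq]
          show c * v1⁻¹ * (p.1 * p.2) = c * v1⁻¹ * p.1 * p.2
          rw [mul_assoc (c * v1⁻¹) p.1 p.2]
        · intro x hx q hq
          simp at hq
          subst hq
          show (c * s, a).1 = x.1 * x.2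
          exact (hE_last x hx).symm
    · intro x hx q hq
      simp at hq
      subst hq
      show (u, a).1 = x.1 * x.2
      exact hA_junction x hx
  have hwr1 : Wrap Estep el' := by
    intro p hp q hq
    rw [hlast_el'] at hp
    simp at hp
    subst hp
    rcases eq_or_ne A [] with hA0 | hAne
    · have : el'.head? = some (u, a) := by rw [hel', hA0]; rfl
      rw [this] at hq
      simp at hq
      subst hq
      show u = c * s * a
      rw [hcsa]
      -- from wrap of el with A = []: head el = (u,s): u*s = u
      have := hhead_fst (u, s) (by rw [hsp, hA0]; rfl)
      exact this
    · have hq' : q ∈ el.head? := by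
        rw [hel', head?_append_left hAne] at hq
        rw [hsp, head?_append_left hAne]
        exact hq
      show q.1 = c * s * a
      rw [hcsa]
      exact hhead_fst q hq'
  -- nodup
  have hold_fst : el.map Prod.fst = A.map Prod.fst ++ [u] := by rw [hsp]; simp
  have hfst_el' : el'.map Prod.fst =
      (A.map Prod.fst ++ [u]) ++ (E.map Prod.fst ++ [c * s]) := by
    rw [hel']
    simp [List.append_assoc]
  have hndcons := hlc.nodup
  rw [show ((v0, s⁻¹) :: tail).map Prod.fst = v0 :: tail.map Prod.fst from rfl,
    List.nodup_cons] at hndcons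
  have htail_nodup : (tail.map Prod.fst).Nodup := hndcons.2
  have hv0nmem : v0 ∉ tail.map Prod.fst := hndcons.1
  have htailH : ∀ x ∈ tail.map Prod.fst, x ∈ H := by
    intro x hx
    rw [List.mem_map] at hx
    obtain ⟨p, hp, rfl⟩ := hx
    exact hlc.verts p (List.mem_cons_of_mem _ hp)
  have hfstE : E.map Prod.fst = (tail.map Prod.fst).map (fun x => c * v1⁻¹ * x) := by
    rw [hE, List.map_map, List.map_map]
    rfl
  have hnewform : ∀ x ∈ E.map Prod.fst ++ [c * s], ∃ h : G, h ∈ H ∧ x = c * h := by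
    intro x hx
    rcases List.mem_append.mp hx with hx1 | hx2
    · rw [hfstE, List.mem_map] at hx1
      obtain ⟨y, hy, rfl⟩ := hx1
      exact ⟨v1⁻¹ * y, mul_mem (inv_mem hv1H) (htailH y hy), by rw [mul_assoc]⟩
    · simp at hx2
      exact ⟨s, hsH, hx2⟩
  have hnod' : (el'.map Prod.fst).Nodup := by
    rw [hfst_el']
    apply List.Nodup.append
    · rw [← hold_fst]; exact hel.nodup
    · apply List.Nodup.append
      · rw [hfstE]
        refine htail_nodup.map ?_
        intro x y hxy
        exact mul_left_cancel hxy
      · simp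
      · intro x hx hy
        simp at hy
        rw [hfstE, List.mem_map] at hx
        obtain ⟨z, hz, hze⟩ := hx
        rw [hy] at hze
        have hze' : c * v1⁻¹ * z = c * v1⁻¹ * v0 := by
          rw [hze, mul_assoc c v1⁻¹ v0, hv1inv]
        have : z = v0 := mul_left_cancel hze'
        rw [this] at hz
        exact hv0nmem hz
    · intro x hx hy
      have hxV : x ∈ vset el := by rw [← hold_fst] at hx; exact hx
      obtain ⟨h, hh, rfl⟩ := hnewform x hy
      exact hdisj h hh hxV
  -- labels
  have hlab' : ∀ p ∈ el', p.2 = a ∨ (p.2 ∈ H ∧ InL LL p.2) := by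
    intro p hp
    rw [hel'] at hp
    rcases List.mem_append.mp hp with hpA | hpr
    · exact hel.labels p (by rw [hsp]; exact List.mem_append_left _ hpA)
    · rcases List.mem_cons.mp hpr with rfl | hpr2
      · exact Or.inl rfl
      · rcases List.mem_append.mp hpr2 with hpE | hpc
        · rw [hE, List.mem_map] at hpE
          obtain ⟨q, hq, rfl⟩ := hpE
          exact Or.inr (hlc.labels q (List.mem_cons_of_mem _ hq))
        · simp at hpc
          rw [hpc]
          exact Or.inl rfl
  -- coset
  have hcos' : ∀ p ∈ el', ∀ h : G, h ∈ H → p.1 * h ∈ vset el' := by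
    intro p hp h hh
    rw [hel'] at hp
    rcases List.mem_append.mp hp with hpA | hpr
    · exact hVsub (hel.coset p (by rw [hsp]; exact List.mem_append_left _ hpA) h hh)
    · rcases List.mem_cons.mp hpr with rfl | hpr2
      · exact hVsub (hel.coset (u, s) hus_mem h hh)
      · rcases List.mem_append.mp hpr2 with hpE | hpc
        · rw [hE, List.mem_map] at hpE
          obtain ⟨q, hq, rfl⟩ := hpE
          show c * v1⁻¹ * q.1 * h ∈ vset el'
          have : c * v1⁻¹ * q.1 * h = c * (v1⁻¹ * q.1 * h) := by
            simp [mul_assoc]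
          rw [this]
          exact hnewV _ (mul_mem (mul_mem (inv_mem hv1H)
            (hlc.verts q (List.mem_cons_of_mem _ hq))) hh)
        · simp at hpc
          rw [hpc]
          show c * s * h ∈ vset el'
          rw [mul_assoc]
          exact hnewV _ (mul_mem hsH hh)
  -- boundary
  have hbdA : List.IsChain (Bd a H LL (vset el')) A := by
    have hb := hel.bd.1
    rw [hsp, List.isChain_append] at hb
    refine hb.1.imp ?_
    intro p q hpq
    rcases hpq with h1 | h2
    · exact Or.inl (hVsub (by rwa [← hsp] at h1))
    · exact Or.inr h2
  have hbd' : CPair (Bd a H LL (vset el')) el' := by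
    constructor
    · rw [hel', List.isChain_append]
      refine ⟨hbdA, ?_, ?_⟩
      · rw [List.isChain_cons]
        constructor
        · intro q hq
          left
          rcases eq_or_ne tail [] with htl | htne
          · have hE0 : E = [] := by rw [hE, htl]; rfl
            rw [hE0] at hq
            simp at hq
            subst hq
            show c * s * a ∈ vset el'
            rw [hcsa]; exact husV'
          · rw [head?_append_left (hEne htne)] at hq
            rw [hE_head q hq, hca]
            exact huV'
        · rw [List.isChain_append]
          refine ⟨?_, by simp, ?_⟩
          · rw [hE, List.isChain_map]
            have hcm : List.IsChain (CmRel a H LL) tail := hlc.comm.1.tail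
            refine hcm.imp ?_
            intro p q hpq
            exact Or.inr hpq
          · intro x hx q hq
            simp at hq
            subst hq
            left
            show c * s * a ∈ vset el'
            rw [hcsa]; exact husV'
      · intro x hx q hq
        simp at hq
        subst hq
        left
        show u * a ∈ vset el'
        rw [← hc_def]; exact hcV'
    · intro p hp q hq
      rw [hlast_el'] at hp
      simp at hp
      subst hp
      left
      rcases eq_or_ne A [] with hA0 | hAne
      · have : el'.head? = some (u, a) := by rw [hel', hA0]; rfl
        rw [this] at hq
        simp at hq
        subst hq
        show u * a ∈ vset el'
        rw [← hc_def]; exact hcV'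
      · have hq' : q ∈ el.head? := by
          rw [hel', head?_append_left hAne] at hq
          rw [hsp, head?_append_left hAne]
          exact hq
        rw [hhead_fst q hq', husa]
        exact hcsV'
  refine ⟨el', ⟨by rw [hel']; simp, ⟨hch1, hwr1⟩, hnod', hlab', hcos', hbd'⟩, ?_⟩
  rw [hel', hsp]
  simp [hE]


theorem length_le_card [Finite G] {el : List (G × G)} (h : GoodC a H LL el) :
    el.length ≤ Nat.card G := by
  obtain ⟨inst⟩ := nonempty_fintype G
  have h1 := h.nodup.length_le_card
  rw [List.length_map] at h1
  rwa [Nat.card_eq_fintype_card]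

theorem cpair_pred {R : G × G → G × G → Prop} {A B : List (G × G)} {p : G × G}
    (h : CPair R (A ++ p :: B)) :
    (A = [] ∧ ∃ q ∈ (A ++ p :: B).getLast?, R q p) ∨ (∃ A' q, A = A' ++ [q] ∧ R q p) := by
  rcases List.eq_nil_or_concat A with rfl | ⟨A', q, rfl⟩
  · left
    refine ⟨rfl, ?_⟩
    cases hlast : (([] : List (G × G)) ++ p :: B).getLast? with
    | none => simp at hlast
    | some q =>
      have hm1 : q ∈ (([] : List (G × G)) ++ p :: B).getLast? := by
        rw [hlast]; exact Option.mem_def.mpr rfl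
      exact ⟨q, Option.mem_def.mpr rfl, h.2 q hm1 p (by simp)⟩
  · right
    rw [List.concat_eq_append] at *
    exact ⟨A', q, rfl, chain'_rel_concat_cons h.1⟩

theorem grow [Finite G] (ha2 : a * a = 1) {el0 : List (G × G)} (h0 : HC a H LL el0)
    (hLL : el0.map Prod.snd = LL)
    (hgen' : ∀ g : G, g ∈ Subgroup.closure ((H : Set G) ∪ {a}))
    {el : List (G × G)} (hel : GoodC a H LL el) (hlen : el.length < Nat.card G) :
    ∃ el', GoodC a H LL el' ∧ el.length < el'.length := by
  classical
  obtain ⟨inst⟩ := nonempty_fintype G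
  have hg : ∃ g : G, g ∉ vset el := by
    by_contra hcon
    push_neg at hcon
    have h1 : (el.map Prod.fst).toFinset = Finset.univ :=
      Finset.eq_univ_iff_forall.mpr fun x => List.mem_toFinset.mpr (hcon x)
    have h2 := List.toFinset_card_of_nodup hel.nodup
    rw [h1, Finset.card_univ, List.length_map] at h2
    rw [Nat.card_eq_fintype_card] at hlen
    omega
  obtain ⟨g, hgV⟩ := hg
  have hbv : ∃ p ∈ el, p.1 * a ∉ vset el := by
    by_contra hcon
    push_neg at hcon
    have hP : ∀ x : G, x ∈ Subgroup.closure ((H : Set G) ∪ {a}) →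
        ∀ v ∈ vset el, v * x ∈ vset el := by
      intro x hx
      induction hx using Subgroup.closure_induction with
      | mem y hy =>
        intro v hv
        rw [mem_vset] at hv
        obtain ⟨p, hp, rfl⟩ := hv
        rcases hy with hyH | hya
        · exact hel.coset p hp y hyH
        · simp only [Set.mem_singleton_iff] at hya
          subst hya
          exact hcon p hp
      | one => intro v hv; simpa using hv
      | mul x y hx hy ihx ihy =>
        intro v hv
        rw [← mul_assoc]
        exact ihy _ (ihx v hv)
      | inv x hx ihx =>
        intro v hv
        have hpow : ∀ k : ℕ, ∀ w ∈ vset el, w * x ^ k ∈ vset el := by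
          intro k
          induction k with
          | zero => intro w hw; simpa using hw
          | succ k ih =>
            intro w hw
            rw [pow_succ, ← mul_assoc]
            exact ihx _ (ih w hw)
        have ho : 0 < orderOf x := orderOf_pos x
        have hinv : x⁻¹ = x ^ (orderOf x - 1) := by
          have hmm : x * x ^ (orderOf x - 1) = 1 := by
            rw [← pow_succ', Nat.sub_add_cancel ho]
            exact pow_orderOf_eq_one x
          rw [← inv_eq_of_mul_eq_one_right hmm]
        rw [hinv]
        exact hpow _ v hv
    obtain ⟨q0, hq0⟩ := List.exists_mem_of_ne_nil el hel.ne
    have hv0 : ∃ v, v ∈ vset el := ⟨q0.1, mem_vset.mpr ⟨q0, hq0, rfl⟩⟩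
    obtain ⟨v, hv⟩ := hv0
    have := hP (v⁻¹ * g) (hgen' _) v hv
    rw [mul_inv_cancel_left] at this
    exact hgV this
  obtain ⟨p, hpmem, hpa⟩ := hbv
  obtain ⟨A, B, hAB⟩ := List.append_of_mem hpmem
  subst hAB
  have hbd := hel.bd
  have hCm : (∃ q ∈ (A ++ p :: B).getLast?, A = [] ∧
      (Cm a H LL q.2 ∨ Cm a H LL p.2) ∧ p.1 = q.1 * q.2) ∨
      (∃ A' q, A = A' ++ [q] ∧ (Cm a H LL q.2 ∨ Cm a H LL p.2) ∧ p.1 = q.1 * q.2) := by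
    rcases cpair_pred hbd with ⟨hA0, q, hq, hrel⟩ | ⟨A', q, hA', hrel⟩
    · left
      refine ⟨q, hq, hA0, ?_, ?_⟩
      · rcases hrel with h1 | h2
        · exact absurd h1 hpa
        · exact h2
      · exact hel.chain.2 q hq p (by rw [hA0]; rfl)
    · right
      refine ⟨A', q, hA', ?_, ?_⟩
      · rcases hrel with h1 | h2
        · exact absurd h1 hpa
        · exact h2
      · have := hel.chain.1
        rw [hA'] at this
        exact chain'_rel_concat_cons this
  have main : ∀ (X Y : List (G × G)) (q : G × G), (A ++ p :: B) = X ++ q :: Y →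
      Cm a H LL q.2 → q.1 * a ∉ vset (A ++ p :: B) →
      ∃ el', GoodC a H LL el' ∧ (A ++ p :: B).length < el'.length := by
    intro X Y q hsplit hq hqa
    have hrot : GoodC a H LL ((q :: Y) ++ X) := by
      rw [hsplit] at hel
      exact hel.rotate
    have hrot2 : GoodC a H LL ((Y ++ X) ++ [q]) := by
      have he : (q :: Y) ++ X = [q] ++ (Y ++ X) := by simp
      rw [he] at hrot
      exact hrot.rotate
    have hqa2 : q.1 * a ∉ vset ((Y ++ X) ++ [q]) := by
      have hv1 : vset ((Y ++ X) ++ [q]) = vset ([q] ++ (Y ++ X)) := vset_rotate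
      have hv2 : vset ([q] ++ (Y ++ X)) = vset (X ++ q :: Y) := by
        have he : ([q] ++ (Y ++ X) : List (G × G)) = (q :: Y) ++ X := by simp
        rw [he, ← vset_rotate]
      rw [hv1, hv2, ← hsplit]
      exact hqa
    obtain ⟨el', hel', hlt⟩ := expand ha2 h0 hLL hrot2
      (by rw [show ((q.1, q.2) : G × G) = q from rfl]) hq.1 hq.2.1 hq.2.2 hqa2
    refine ⟨el', hel', ?_⟩
    have he : ((Y ++ X) ++ [q]).length = (A ++ p :: B).length := by
      rw [hsplit]; simp; omega
    omega
  have htrans : ∀ q : G × G, Cm a H LL q.2 → p.1 = q.1 * q.2 →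
      q.1 * a ∉ vset (A ++ p :: B) := by
    intro q hq hstep hmem
    rw [mem_vset] at hmem
    obtain ⟨pp, hpp, hppe⟩ := hmem
    have h2 := hel.coset pp hpp q.2 hq.1
    rw [hppe] at h2
    have heq : q.1 * a * q.2 = p.1 * a := by
      rw [mul_assoc, ← hq.2.2.eq, ← mul_assoc, ← hstep]
    rw [heq] at h2
    exact hpa h2
  rcases hCm with ⟨q, hq, hA0, hrel, hstep⟩ | ⟨A', q, hA', hrel, hstep⟩
  · rcases hrel with hcq | hcp
    · subst hA0
      have hq2 : q ∈ (p :: B).getLast? := by simpa using hq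
      have hne2 : (p :: B : List (G × G)) ≠ [] := by simp
      have h4 : (p :: B).getLast hne2 = q := by
        rw [List.getLast?_eq_getLast hne2] at hq2
        simp only [Option.mem_def, Option.some.injEq] at hq2
        exact hq2
      have hX : ([] : List (G × G)) ++ p :: B = (p :: B).dropLast ++ q :: [] := by
        rw [List.nil_append]
        have h3 := List.dropLast_append_getLast hne2
        rw [h4] at h3
        simpa using h3.symm
      exact main _ [] q hX hcq (htrans q hcq hstep)
    · exact main [] B p (by rw [hA0]) hcp hpa
  · rcases hrel with hcq | hcp
    · have hX : A ++ p :: B = A' ++ q :: (p :: B) := by rw [hA']; simp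
      exact main A' (p :: B) q hX hcq (htrans q hcq hstep)
    · exact main A B p rfl hcp hpa

theorem finish [Finite G] {S : Set G} {el : List (G × G)} (hel : GoodC a H LL el)
    (hlen : el.length = Nat.card G)
    (hSa : a ∈ S ∨ a⁻¹ ∈ S)
    (hSL : ∀ x : G, InL LL x → x ∈ S ∨ x⁻¹ ∈ S) :
    ∃ l : List G, IsHamCycle S l := by
  classical
  obtain ⟨inst⟩ := nonempty_fintype G
  have huniv : ∀ x : G, x ∈ vset el := by
    intro x
    have h2 := List.toFinset_card_of_nodup hel.nodup
    rw [List.length_map, hlen, Nat.card_eq_fintype_card] at h2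
    have h3 : (el.map Prod.fst).toFinset = Finset.univ := Finset.eq_univ_of_card _ h2
    have h4 : x ∈ (el.map Prod.fst).toFinset := h3 ▸ Finset.mem_univ x
    exact List.mem_toFinset.mp h4
  obtain ⟨p, hp, hp1⟩ := mem_vset.mp (huniv 1)
  obtain ⟨A, B, rfl⟩ := List.append_of_mem hp
  have hel2 : GoodC a H LL ((p :: B) ++ A) := hel.rotate
  have hlen2 : ((p :: B) ++ A).length = Nat.card G := by
    have he : ((p :: B) ++ A).length = (A ++ p :: B).length := by simp; omega
    exact he.trans hlen
  set el2 := (p :: B) ++ A with hel2def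
  have h0lt : 0 < el2.length := by
    show 0 < ((p :: B) ++ A).length
    simp
  have hhead : el2[0]'h0lt = p := rfl
  have hch := hel2.chain.1
  have hpfx : ∀ k (hk : k < el2.length), ((el2.map Prod.snd).take k).prod = (el2[k]'hk).1 := by
    intro k hk
    have := fst_getElem hch k hk h0lt
    rw [this, hhead, hp1, one_mul]
  refine ⟨el2.map Prod.snd, ?_, ?_, ?_, ?_⟩
  · intro x hx
    rw [List.mem_map] at hx
    obtain ⟨q, hq, rfl⟩ := hx
    rcases hel2.labels q hq with h1 | h2
    · rw [h1]; exact hSa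
    · exact hSL _ h2.2
  · have hn1 : el2.length - 1 < el2.length := by omega
    have hprodsucc := List.prod_take_succ (el2.map Prod.snd) (el2.length - 1)
      (by rw [List.length_map]; omega)
    have hsub : el2.length - 1 + 1 = el2.length := by omega
    rw [hsub] at hprodsucc
    have hfull : (el2.map Prod.snd).take el2.length = el2.map Prod.snd := by
      rw [show el2.length = (el2.map Prod.snd).length from (List.length_map _).symm,
        List.take_length]
    rw [hfull] at hprodsucc
    rw [hprodsucc, hpfx (el2.length - 1) hn1, List.getElem_map]
    have hwr := hel2.chain.2 (el2[el2.length - 1]'hn1) ?_ (el2[0]'h0lt) ?_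
    · have h5 : (el2[0]'h0lt).1 = 1 := by rw [hhead, hp1]
      rw [← h5]
      exact hwr.symm
    · rw [List.getLast?_eq_getElem?]
      have h6 : el2[el2.length - 1]? = some (el2[el2.length - 1]'hn1) :=
        List.getElem?_eq_getElem hn1
      rw [h6]; rfl
    · have h7 : el2.head? = some p := rfl
      rw [h7, ← hhead]; rfl
  · rw [List.length_map]; exact hlen2
  · have hlist : (List.range (el2.map Prod.snd).length).map
        (fun k => ((el2.map Prod.snd).take k).prod) = el2.map Prod.fst := by
      apply List.ext_getElem
      · simp
      · intro k h1 h2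
        simp only [List.getElem_map, List.getElem_range]
        have hk : k < el2.length := by
          simp only [List.length_map, List.length_range] at h1
          exact h1
        rw [hpfx k hk]
    rw [hlist]
    exact hel2.nodup

theorem main_ind [Finite G] (ha2 : a * a = 1) {el0 : List (G × G)} (h0 : HC a H LL el0)
    (hLL : el0.map Prod.snd = LL)
    (hgen' : ∀ g : G, g ∈ Subgroup.closure ((H : Set G) ∪ {a}))
    {S : Set G} (hSa : a ∈ S ∨ a⁻¹ ∈ S)
    (hSL : ∀ x : G, InL LL x → x ∈ S ∨ x⁻¹ ∈ S) :
    ∀ d : ℕ, ∀ el, GoodC a H LL el → Nat.card G ≤ el.length + d →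
      ∃ l : List G, IsHamCycle S l := by
  intro d
  induction d with
  | zero =>
    intro el hel hle
    exact finish hel (le_antisymm (length_le_card hel) (by simpa using hle)) hSa hSL
  | succ d ih =>
    intro el hel hle
    rcases lt_or_ge el.length (Nat.card G) with hlt | hge
    · obtain ⟨el', hel', hlen'⟩ := grow ha2 h0 hLL hgen' hel hlt
      exact ih el' hel' (by omega)
    · exact finish hel (le_antisymm (length_le_card hel) hge) hSa hSL

end Param
end Stmt8


open Stmt8

/-- Proposition 3.5. Let `G` be a finite group with generating set
`S = {r₁,…,rₙ}` where `rₙ` has order two, and let `H = ⟨r₁,…,r_{n-1}⟩`. If the Cayley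
graph `Γ(H, {r₁,…,r_{n-1}})` has a Hamiltonian cycle `C_H` (encoded as a cyclic list
`lH` of edge labels) such that whenever `s, t` are (cyclically) consecutive edge labels
in `C_H`, at least one of `s, t` commutes with `rₙ`, then `Γ(G,S)` has a Hamiltonian
cycle. -/
theorem stmt8 {G : Type*} [Group G] [Finite G] (n : ℕ) (r : Fin (n + 1) → G)
    (hgen : Subgroup.closure (Set.range r) = ⊤)
    (hord : orderOf (r (Fin.last n)) = 2)
    (H : Subgroup G)
    (hH : H = Subgroup.closure (Set.range fun i : Fin n => r i.castSucc))
    (lH : List H)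
    (hCH : IsHamCycle {x : H | ∃ i : Fin n, (x : G) = r i.castSucc} lH)
    (hcons : ∀ i : Fin lH.length,
      Commute (lH.get i : G) (r (Fin.last n)) ∨
      Commute (lH.get ⟨((i : ℕ) + 1) % lH.length, Nat.mod_lt _ i.pos⟩ : G) (r (Fin.last n))) :
    ∃ l : List G, IsHamCycle (Set.range r) l := by
  classical
  obtain ⟨hlab, hprod, hlenH, hnodup⟩ := hCH
  set a := r (Fin.last n) with ha_def
  set lHg : List G := lH.map (⇑H.subtype) with hlHg
  have hm : lHg.length = lH.length := List.length_map _
  obtain ⟨instH⟩ := nonempty_fintype (↥H)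
  have hHpos : 0 < lH.length := by
    rw [hlenH]
    exact Nat.card_pos
  have ha2 : a * a = 1 := by
    have h1 := pow_orderOf_eq_one a
    rw [hord, pow_two] at h1
    exact h1
  have hcoe_take : ∀ k, (lHg.take k).prod = H.subtype ((lH.take k).prod) := by
    intro k
    rw [hlHg, ← List.map_take, List.prod_hom]
  have hprodg : lHg.prod = 1 := by
    rw [hlHg, List.prod_hom, hprod, map_one]
  have hPL : ∀ y : ↥H, ∃ k < lH.length, (lH.take k).prod = y := by
    have hlenPL : ((List.range lH.length).map fun k => (lH.take k).prod).length =
        Fintype.card ↥H := by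
      rw [List.length_map, List.length_range, hlenH, Nat.card_eq_fintype_card]
    have huniv := Finset.eq_univ_of_card _
      ((List.toFinset_card_of_nodup hnodup).trans hlenPL)
    intro y
    have hmem : y ∈ ((List.range lH.length).map fun k => (lH.take k).prod).toFinset :=
      huniv ▸ Finset.mem_univ y
    rw [List.mem_toFinset, List.mem_map] at hmem
    obtain ⟨k, hk, hke⟩ := hmem
    exact ⟨k, List.mem_range.mp hk, hke⟩
  set el0 := edgesOf 1 lHg with hel0
  have hne0 : lHg ≠ [] := by
    intro hc
    rw [← List.length_eq_zero_iff] at hc  -- lHg.length = 0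
    omega
  have hel0ne : el0 ≠ [] := by
    rw [hel0]
    intro hc
    have h1 := length_edgesOf 1 lHg
    rw [hc, List.length_nil] at h1
    exact hne0 (List.length_eq_zero_iff.mp h1.symm)
  have hfst0 : el0.map Prod.fst = (List.range lHg.length).map fun k => (lHg.take k).prod := by
    rw [hel0, map_fst_edgesOf]
    exact List.map_congr_left fun k _ => one_mul _
  have hsnd0 : el0.map Prod.snd = lHg := map_snd_edgesOf 1 lHg
  have hlen0 : el0.length = lH.length := by rw [hel0, length_edgesOf, hm]
  have hfstH : ∀ p ∈ el0, p.1 ∈ H := by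
    intro p hp
    have h1 : p.1 ∈ el0.map Prod.fst := List.mem_map_of_mem hp
    rw [hfst0, List.mem_map] at h1
    obtain ⟨k, _, hke⟩ := h1
    rw [← hke, hcoe_take]
    exact ((lH.take k).prod).2
  have hsndmem : ∀ p ∈ el0, p.2 ∈ lHg := by
    intro p hp
    rw [← hsnd0]
    exact List.mem_map_of_mem hp
  have hsndH : ∀ x ∈ lHg, x ∈ H := by
    intro x hx
    rw [hlHg, List.mem_map] at hx
    obtain ⟨y, _, rfl⟩ := hx
    exact y.2
  -- the cyclic commuting condition on el0
  have hget : ∀ (k : ℕ) (hk : k < el0.length),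
      (el0[k]'hk).2 = H.subtype (lH[k]'(by omega)) := by
    intro k hk
    have h1 : (el0.map Prod.snd)[k]'(by rw [List.length_map]; exact hk) = (el0[k]'hk).2 :=
      List.getElem_map _
    rw [← h1]
    rw [List.getElem_of_eq hsnd0 (by rw [List.length_map]; exact hk)]
    rw [List.getElem_of_eq hlHg (by rw [hm, ← hlen0]; exact hk)]
    rw [List.getElem_map]
  have hCm0 : ∀ (k : ℕ) (hk : k < el0.length), Commute ((el0[k]'hk).2) a →
      Cm a H lHg ((el0[k]'hk).2) := by
    intro k hk hcomm
    refine ⟨?_, Or.inl ?_, hcomm⟩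
    · exact hsndH _ (hsndmem _ (el0.getElem_mem hk))
    · exact hsndmem _ (el0.getElem_mem hk)
  have hcomm0 : CPair (CmRel a H lHg) el0 := by
    constructor
    · rw [List.isChain_iff_getElem]
      intro i hi
      have hi1 : i < el0.length := by omega
      have hi2 : i + 1 < el0.length := by omega
      have := hcons ⟨i, by omega⟩
      have hmod : (i + 1) % lH.length = i + 1 := Nat.mod_eq_of_lt (by omega)
      rcases this with h1 | h1
      · left
        apply hCm0 i hi1
        rw [hget i hi1]
        simp only [List.get_eq_getElem] at h1
        exact h1
      · right
        apply hCm0 (i + 1) hi2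
        rw [hget (i + 1) hi2]
        simp only [List.get_eq_getElem] at h1
        simp only [hmod] at h1
        exact h1
    · intro p hp q hq
      have hlt : el0.length - 1 < el0.length := by omega
      have hp' : p = el0[el0.length - 1]'hlt := by
        rw [List.getLast?_eq_getElem?, List.getElem?_eq_getElem hlt] at hp
        simp at hp
        exact hp.symm
      have hq' : q = el0[0]'(by omega) := by
        rw [List.head?_eq_getElem?, List.getElem?_eq_getElem (by omega : 0 < el0.length)] at hq
        simp at hq
        exact hq.symm
      have := hcons ⟨lH.length - 1, by omega⟩
      have hmod : (lH.length - 1 + 1) % lH.length = 0 := by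
        rw [Nat.sub_add_cancel hHpos, Nat.mod_self]
      rcases this with h1 | h1
      · left
        rw [hp']
        apply hCm0 (el0.length - 1) hlt
        rw [hget (el0.length - 1) hlt]
        simp only [List.get_eq_getElem] at h1
        have hidx : el0.length - 1 = lH.length - 1 := by omega
        simp only [hidx]
        exact h1
      · right
        rw [hq']
        apply hCm0 0 (by omega)
        rw [hget 0 (by omega)]
        simp only [List.get_eq_getElem] at h1
        simp only [hmod] at h1
        exact h1
  have hchain0 : CPair Estep el0 := by
    constructor
    · exact chain'_edgesOf 1 lHg
    · intro p hp q hq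
      have h1 := getLast?_edgesOf 1 lHg p (by rw [← hel0]; exact hp)
      have h2 := head?_fst_edgesOf 1 lHg q (by rw [← hel0]; exact hq)
      show q.1 = p.1 * p.2
      rw [h1, h2, hprodg, one_mul]
  have hnodup0 : (el0.map Prod.fst).Nodup := by
    rw [hfst0]
    have heq : (List.range lHg.length).map (fun k => (lHg.take k).prod) =
        ((List.range lH.length).map fun k => (lH.take k).prod).map (⇑H.subtype) := by
      rw [hm, List.map_map]
      exact List.map_congr_left fun k _ => by
        simp only [Function.comp_apply]
        exact hcoe_take k
    rw [heq]
    exact hnodup.map H.subtype_injective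
  have hcover0 : ∀ g : G, g ∈ H → g ∈ vset el0 := by
    intro g hg
    obtain ⟨k, hk, hke⟩ := hPL ⟨g, hg⟩
    have : g ∈ el0.map Prod.fst := by
      rw [hfst0, List.mem_map]
      refine ⟨k, List.mem_range.mpr (by omega), ?_⟩
      rw [hcoe_take, hke]
      rfl
    exact this
  have h0 : HC a H lHg el0 :=
    ⟨hel0ne, hchain0, hnodup0, fun p hp => ⟨hsndH _ (hsndmem _ hp), Or.inl (hsndmem _ hp)⟩,
      hfstH, hcover0, hcomm0⟩
  have hgood0 : GoodC a H lHg el0 :=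
    ⟨hel0ne, hchain0, hnodup0,
      fun p hp => Or.inr ⟨hsndH _ (hsndmem _ hp), Or.inl (hsndmem _ hp)⟩,
      fun p hp h hh => hcover0 _ (mul_mem (hfstH p hp) hh),
      hcomm0.mono fun p q hpq => Or.inr hpq⟩
  have hgen' : ∀ g : G, g ∈ Subgroup.closure ((H : Set G) ∪ {a}) := by
    have hsub : Set.range r ⊆ (H : Set G) ∪ {a} := by
      rintro x ⟨i, rfl⟩
      induction i using Fin.lastCases with
      | last => right; rw [ha_def]; rfl
      | cast j =>
        left
        show r j.castSucc ∈ H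
        rw [hH]
        exact Subgroup.subset_closure ⟨j, rfl⟩
    intro g
    have h1 : g ∈ Subgroup.closure (Set.range r) := by rw [hgen]; trivial
    exact Subgroup.closure_mono hsub h1
  have hSa : a ∈ Set.range r ∨ a⁻¹ ∈ Set.range r := Or.inl ⟨Fin.last n, rfl⟩
  have hSL : ∀ x : G, InL lHg x → x ∈ Set.range r ∨ x⁻¹ ∈ Set.range r := by
    have key : ∀ y : ↥H, y ∈ lH → (y : G) ∈ Set.range r ∨ ((y : G))⁻¹ ∈ Set.range r := by
      intro y hy
      rcases hlab y hy with h1 | h1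
      · obtain ⟨i, hi⟩ := h1
        exact Or.inl ⟨i.castSucc, hi.symm⟩
      · obtain ⟨i, hi⟩ := h1
        right
        refine ⟨i.castSucc, ?_⟩
        rw [← hi]
        rfl
    intro x hx
    rcases hx with h1 | h1
    · rw [hlHg, List.mem_map] at h1
      obtain ⟨y, hy, rfl⟩ := h1
      exact key y hy
    · rw [hlHg, List.mem_map] at h1
      obtain ⟨y, hy, hye⟩ := h1
      rcases key y hy with h2 | h2
      · right
        rw [show H.subtype y = (y : G) from rfl] at hye
        rw [hye] at h2
        exact h2
      · left
        have h3 : ((y : G))⁻¹ = x := by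
          rw [show (y : G) = x⁻¹ from hye, inv_inv]
        rw [← h3]
        exact h2
  exact Stmt8.main_ind ha2 h0 hsnd0 hgen' hSa hSL (Nat.card G) el0 hgood0 (by omega)
end

section
/- Let G be a finite group with generating set S = {r_1,...,r_n} where r_n has order two, let H = ⟨r_1,...,r_{n-1}⟩, let Γ_1,...,Γ_k be the components of the Cayley graph Γ(G, S \ {r_n}) (whose vertex sets are the left cosets of H), and let c(i,j) be the number of edges of Γ(G,S) labeled r_n joining Γ_i and Γ_j. If Γ(H, S \ {r_n}) has a Hamiltonian cycle C_H such that the number of positions in C_H at which two consecutive edge labels both fail to commute with r_n is strictly less than c(i,j) for every pair (i,j) with c(i,j) > 0, then Γ(G,S) has a Hamiltonian cycle. -/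
set_option linter.unusedSectionVars false

open Equiv Equiv.Perm List

namespace Stmt12Aux

section Merge

variable {α : Type*} [Finite α] [DecidableEq α]

lemma pow_succ_apply (ρ : Equiv.Perm α) (j : ℕ) (x : α) :
    (ρ ^ (j + 1)) x = ρ ((ρ ^ j) x) := by
  rw [pow_succ', Equiv.Perm.mul_apply]

/-- transfer of orbits: if `π` agrees with `ρ` on `V` except possibly at `w`,
and `ρ` is a cycle on `V`, then every point of `V` is reachable from `ρ w` by `π`. -/
lemma orbit_transfer (π ρ : Equiv.Perm α) (V : Set α) (w : α)
    (hρ : ρ.IsCycleOn V) (hw : w ∈ V)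
    (hagree : ∀ z ∈ V, z ≠ w → π z = ρ z) :
    ∀ y ∈ V, ∃ m : ℕ, (π ^ m) (ρ w) = y := by
  intro y hy
  have hρw : ρ w ∈ V := hρ.1.mapsTo hw
  have hsc : ρ.SameCycle (ρ w) y := hρ.2 hρw hy
  obtain ⟨i, _, hi⟩ := hsc.exists_pow_eq'
  have hP : ∃ i, (ρ ^ i) (ρ w) = y := ⟨i, hi⟩
  set i₀ := Nat.find hP with hi₀def
  have hi₀ : (ρ ^ i₀) (ρ w) = y := Nat.find_spec hP
  have hne : ∀ j < i₀, (ρ ^ j) (ρ w) ≠ w := by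
    intro j hj hjw
    have h1 : (ρ ^ (j + 1)) (ρ w) = ρ w := by
      rw [pow_succ_apply]; exact congrArg ρ hjw
    have h2 : (ρ ^ (i₀ - (j + 1))) (ρ w) = y := by
      have : (ρ ^ (i₀ - (j + 1))) ((ρ ^ (j + 1)) (ρ w)) = y := by
        rw [← Equiv.Perm.mul_apply, ← pow_add, Nat.sub_add_cancel (by omega)]
        exact hi₀
      rwa [h1] at this
    exact absurd h2 (Nat.find_min hP (by omega))
  have hmem : ∀ j, (ρ ^ j) (ρ w) ∈ V := by
    intro j
    induction j with
    | zero => simpa using hρw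
    | succ j ih => rw [pow_succ_apply]; exact hρ.1.mapsTo ih
  have key : ∀ j ≤ i₀, (π ^ j) (ρ w) = (ρ ^ j) (ρ w) := by
    intro j hj
    induction j with
    | zero => simp
    | succ j ih =>
      have hj' : j ≤ i₀ := by omega
      rw [pow_succ_apply, pow_succ_apply, ih hj',
        hagree _ (hmem j) (hne j (by omega))]
  exact ⟨i₀, (key i₀ le_rfl).trans hi₀⟩

lemma merge_isCycleOn (σ τ : Equiv.Perm α) (U B : Set α) (hdisj : Disjoint U B)
    (hU : σ.IsCycleOn U) (hB : τ.IsCycleOn B)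
    (hσid : ∀ x ∉ U, σ x = x) (hτid : ∀ x ∉ B, τ x = x)
    (u v : α) (hu : u ∈ U) (hv : v ∈ B) :
    (σ * τ * Equiv.swap u v).IsCycleOn (U ∪ B) := by
  have hUB : ∀ x, x ∈ U → x ∉ B := fun x hx hxB => (hdisj.le_bot ⟨hx, hxB⟩ : x ∈ (⊥ : Set α))
  have huv : u ≠ v := fun h => hUB u hu (h ▸ hv)
  set σ' := σ * τ * Equiv.swap u v with hσ'
  have e1 : ∀ x ∈ U, x ≠ u → σ' x = σ x := by
    intro x hx hxu
    have hxv : x ≠ v := fun h => hUB x hx (h ▸ hv)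
    simp only [hσ', Equiv.Perm.mul_apply, Equiv.swap_apply_of_ne_of_ne hxu hxv,
      hτid x (hUB x hx)]
  have e2 : ∀ x ∈ B, x ≠ v → σ' x = τ x := by
    intro x hx hxv
    have hxu : x ≠ u := fun h => hUB u hu (h ▸ hx)
    have : τ x ∈ B := hB.1.mapsTo hx
    simp only [hσ', Equiv.Perm.mul_apply, Equiv.swap_apply_of_ne_of_ne hxu hxv,
      hσid _ (fun hh => hUB _ hh this)]
  have e3 : σ' u = τ v := by
    have : τ v ∈ B := hB.1.mapsTo hv
    simp only [hσ', Equiv.Perm.mul_apply, Equiv.swap_apply_left,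
      hσid _ (fun hh => hUB _ hh this)]
  have e4 : σ' v = σ u := by
    simp only [hσ', Equiv.Perm.mul_apply, Equiv.swap_apply_right, hτid u (hUB u hu)]
  have hσu : σ u ∈ U := hU.1.mapsTo hu
  have hτv : τ v ∈ B := hB.1.mapsTo hv
  have hmaps : Set.MapsTo σ' (U ∪ B) (U ∪ B) := by
    rintro x (hx | hx)
    · by_cases hxu : x = u
      · subst hxu; rw [e3]; exact Or.inr hτv
      · rw [e1 x hx hxu]; exact Or.inl (hU.1.mapsTo hx)
    · by_cases hxv : x = v
      · subst hxv; rw [e4]; exact Or.inl hσu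
      · rw [e2 x hx hxv]; exact Or.inr (hB.1.mapsTo hx)
  constructor
  · refine ⟨hmaps, σ'.injective.injOn, ?_⟩
    intro y hy
    rcases hy with hy | hy
    · obtain ⟨x, hx, hxy⟩ := hU.1.surjOn hy
      have hxy' : σ x = y := hxy
      by_cases hxu : x = u
      · subst hxu
        exact ⟨v, Or.inr hv, by rw [e4, hxy']⟩
      · exact ⟨x, Or.inl hx, by rw [e1 x hx hxu, hxy']⟩
    · obtain ⟨x, hx, hxy⟩ := hB.1.surjOn hy
      have hxy' : τ x = y := hxy
      by_cases hxv : x = v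
      · subst hxv
        exact ⟨u, Or.inl hu, by rw [e3, hxy']⟩
      · exact ⟨x, Or.inr hx, by rw [e2 x hx hxv, hxy']⟩
  · have reach : ∀ y ∈ U ∪ B, ∃ m : ℕ, (σ' ^ m) (σ u) = y := by
      have reachU : ∀ y ∈ U, ∃ m : ℕ, (σ' ^ m) (σ u) = y :=
        orbit_transfer σ' σ U u hU hu (fun z hz hzu => e1 z hz hzu)
      rintro y (hy | hy)
      · exact reachU y hy
      · obtain ⟨m₁, hm₁⟩ := reachU u hu
        have h1 : (σ' ^ (m₁ + 1)) (σ u) = τ v := by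
          rw [pow_succ_apply, hm₁, e3]
        obtain ⟨m₂, hm₂⟩ := orbit_transfer σ' τ B v hB hv
          (fun z hz hzv => e2 z hz hzv) y hy
        refine ⟨m₂ + (m₁ + 1), ?_⟩
        rw [pow_add, Equiv.Perm.mul_apply, h1, hm₂]
    intro x hx y hy
    obtain ⟨m₁, hm₁⟩ := reach x hx
    obtain ⟨m₂, hm₂⟩ := reach y hy
    have h₁ : σ'.SameCycle (σ u) x := ⟨(m₁ : ℤ), by simpa [zpow_natCast] using hm₁⟩
    have h₂ : σ'.SameCycle (σ u) y := ⟨(m₂ : ℤ), by simpa [zpow_natCast] using hm₂⟩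
    exact h₁.symm.trans h₂

end Merge

section Grp

variable {G : Type*} [Group G] [Finite G] [DecidableEq G] (H : Subgroup G) (lH : List H)

/-- partial products of the Hamiltonian cycle of `H`, as elements of `G`. -/
def pfn (k : ℕ) : G := ((lH.take k).prod : H)

/-- symmetric generating set membership -/
def SSr {n : ℕ} (r : Fin (n + 1) → G) (x : G) : Prop :=
  x ∈ Set.range r ∨ x⁻¹ ∈ Set.range r

lemma SSr_inv {n : ℕ} (r : Fin (n + 1) → G) {x : G} (h : SSr r x) : SSr r x⁻¹ := by
  rcases h with h | h
  · exact Or.inr (by simpa using h)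
  · exact Or.inl h

/-- the vertex list of the Hamiltonian cycle of `H`, in `G`. -/
def qlist : List G := (List.range lH.length).map (pfn H lH)

lemma pfn_zero : pfn H lH 0 = 1 := by simp [pfn]

lemma pfn_mem (k : ℕ) : pfn H lH k ∈ H := (lH.take k).prod.2

lemma pfn_succ {k : ℕ} (hk : k < lH.length) :
    pfn H lH (k + 1) = pfn H lH k * (lH.get ⟨k, hk⟩ : G) := by
  simp only [pfn]
  rw [List.prod_take_succ _ _ hk]
  push_cast
  simp

lemma pfn_length (hprod : lH.prod = 1) : pfn H lH lH.length = 1 := by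
  simp [pfn, List.take_length, hprod]

lemma qlist_length : (qlist H lH).length = lH.length := by simp [qlist]

lemma qlist_getElem (i : ℕ) (hi : i < lH.length) :
    (qlist H lH)[i]'(by simpa [qlist] using hi) = pfn H lH i := by
  simp [qlist]

lemma qlist_nodup
    (hnd : ((List.range lH.length).map fun k => (lH.take k).prod).Nodup) :
    (qlist H lH).Nodup := by
  have : qlist H lH =
      List.map Subtype.val ((List.range lH.length).map fun k => (lH.take k).prod) := by
    rw [List.map_map]; rfl
  rw [this]
  exact hnd.map Subtype.val_injective

lemma qlist_subset (x : G) (hx : x ∈ qlist H lH) : x ∈ H := by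
  simp only [qlist, List.mem_map] at hx
  obtain ⟨k, _, rfl⟩ := hx
  exact pfn_mem H lH k

lemma qlist_set (hlen : lH.length = Nat.card H)
    (hnd : ((List.range lH.length).map fun k => (lH.take k).prod).Nodup) :
    {x : G | x ∈ qlist H lH} = (H : Set G) := by
  have h1 : {x : G | x ∈ qlist H lH} = ((qlist H lH).toFinset : Set G) := by
    ext x; simp
  have hfin : (H : Set G).Finite := Set.toFinite _
  apply Set.eq_of_subset_of_ncard_le
  · intro x hx; exact qlist_subset H lH x hx
  · rw [h1, Set.ncard_coe_finset,
      List.toFinset_card_of_nodup (qlist_nodup H lH hnd)]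
    have : (H : Set G).ncard = Nat.card H := by
      rw [← Nat.card_coe_set_eq]
      rfl
    rw [this, qlist_length, hlen]
  · exact hfin

lemma mem_qlist_iff (hlen : lH.length = Nat.card H)
    (hnd : ((List.range lH.length).map fun k => (lH.take k).prod).Nodup)
    (x : G) : x ∈ qlist H lH ↔ x ∈ H := by
  have h := Set.ext_iff.mp (qlist_set H lH hlen hnd) x
  simpa using h

section Tau

variable (c : G)

/-- the translated vertex list of the coset `c • H` -/
def mlist : List G := (qlist H lH).map (c * ·)

/-- the standard cyclic permutation of the coset `cH` -/
def cycPerm : Equiv.Perm G := (mlist H lH c).formPerm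

variable (hlen : lH.length = Nat.card H)
  (hnd : ((List.range lH.length).map fun k => (lH.take k).prod).Nodup)
  (hprod : lH.prod = 1)

include hnd

lemma mlist_nodup : (mlist H lH c).Nodup :=
  (qlist_nodup H lH hnd).map (mul_right_injective c)

include hlen

lemma mem_mlist_iff (x : G) :
    x ∈ mlist H lH c ↔ (QuotientGroup.mk c : G ⧸ H) = QuotientGroup.mk x := by
  rw [QuotientGroup.eq]
  constructor
  · intro hx
    simp only [mlist, List.mem_map] at hx
    obtain ⟨y, hy, rfl⟩ := hx
    simpa using (mem_qlist_iff H lH hlen hnd y).mp hy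
  · intro hx
    simp only [mlist, List.mem_map]
    exact ⟨c⁻¹ * x, (mem_qlist_iff H lH hlen hnd _).mpr hx, by group⟩

omit hlen hnd

lemma mlist_length : (mlist H lH c).length = lH.length := by
  simp [mlist, qlist_length]

lemma mlist_getElem (i : ℕ) (hi : i < lH.length) :
    (mlist H lH c)[i]'(by simpa [mlist_length] using hi) = c * pfn H lH i := by
  simp only [mlist, List.getElem_map]
  rw [qlist_getElem H lH i hi]

include hnd hprod

lemma cycPerm_apply (i : ℕ) (hi : i < lH.length) :
    cycPerm H lH c (c * pfn H lH i) = c * pfn H lH (i + 1) := by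
  have hnd' := mlist_nodup H lH c hnd
  have hlm : (mlist H lH c).length = lH.length := mlist_length H lH c
  have h1 : cycPerm H lH c ((mlist H lH c)[i]'(by omega)) =
      (mlist H lH c)[(i + 1) % (mlist H lH c).length]'(Nat.mod_lt _ (by omega)) :=
    List.formPerm_apply_getElem _ hnd' i (by omega)
  rw [mlist_getElem H lH c i hi] at h1
  rcases Nat.lt_or_ge (i + 1) lH.length with h | h
  · have hmod : (i + 1) % (mlist H lH c).length = i + 1 := by
      rw [hlm]; exact Nat.mod_eq_of_lt h
    have h2 : (mlist H lH c)[(i + 1) % (mlist H lH c).length]'(Nat.mod_lt _ (by omega)) =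
        c * pfn H lH (i + 1) := by
      rw [show ((mlist H lH c)[(i + 1) % (mlist H lH c).length]'(Nat.mod_lt _ (by omega))
            = (mlist H lH c)[i + 1]'(by omega)) from by simp only [hmod],
        mlist_getElem H lH c (i+1) h]
    rw [h1, h2]
  · have hK : i + 1 = lH.length := by omega
    have hmod : (i + 1) % (mlist H lH c).length = 0 := by rw [hlm, hK]; simp
    have h2 : (mlist H lH c)[(i + 1) % (mlist H lH c).length]'(Nat.mod_lt _ (by omega)) =
        c * pfn H lH 0 := by
      rw [show ((mlist H lH c)[(i + 1) % (mlist H lH c).length]'(Nat.mod_lt _ (by omega))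
            = (mlist H lH c)[0]'(by omega)) from by simp only [hmod],
        mlist_getElem H lH c 0 (by omega)]
    rw [h1, h2, pfn_zero, hK, pfn_length H lH hprod]

omit hprod

include hlen

lemma cycPerm_not_mem (x : G)
    (hx : (QuotientGroup.mk x : G ⧸ H) ≠ QuotientGroup.mk c) :
    cycPerm H lH c x = x := by
  apply List.formPerm_apply_of_notMem
  rw [mem_mlist_iff H lH c hlen hnd]
  exact fun h => hx h.symm

lemma cycPerm_isCycleOn :
    (cycPerm H lH c).IsCycleOn
      {x : G | (QuotientGroup.mk x : G ⧸ H) = QuotientGroup.mk c} := by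
  have h := (mlist_nodup H lH c hnd).isCycleOn_formPerm
  have hs : {a : G | a ∈ mlist H lH c} =
      {x : G | (QuotientGroup.mk x : G ⧸ H) = QuotientGroup.mk c} := by
    ext x
    rw [Set.mem_setOf_eq, Set.mem_setOf_eq, mem_mlist_iff H lH c hlen hnd, eq_comm]
  rwa [hs] at h

variable {n : ℕ} (r : Fin (n + 1) → G)
  (hS : ∀ i : Fin lH.length, SSr r (lH.get i : G))

include hS hprod

lemma cycPerm_step (x : G)
    (hx : (QuotientGroup.mk x : G ⧸ H) = QuotientGroup.mk c) :
    SSr r (x⁻¹ * cycPerm H lH c x) := by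
  have hx' : x ∈ mlist H lH c := (mem_mlist_iff H lH c hlen hnd x).mpr hx.symm
  obtain ⟨i, hi, rfl⟩ := List.mem_iff_getElem.mp hx'
  have hi' : i < lH.length := by rwa [mlist_length] at hi
  rw [mlist_getElem H lH c i hi', cycPerm_apply H lH c hnd hprod i hi',
    pfn_succ H lH hi']
  have : (c * pfn H lH i)⁻¹ * (c * (pfn H lH i * (lH.get ⟨i, hi'⟩ : G))) =
      (lH.get ⟨i, hi'⟩ : G) := by group
  rw [this]
  exact hS ⟨i, hi'⟩

end Tau

section NewStuff

variable (c : G) (hlen : lH.length = Nat.card H)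
  (hnd : ((List.range lH.length).map fun k => (lH.take k).prod).Nodup)
  (hprod : lH.prod = 1)

include hlen hnd

lemma cycPermInv_not_mem (x : G)
    (hx : (QuotientGroup.mk x : G ⧸ H) ≠ QuotientGroup.mk c) :
    (cycPerm H lH c)⁻¹ x = x := by
  have h := cycPerm_not_mem H lH c hlen hnd x hx
  calc (cycPerm H lH c)⁻¹ x = (cycPerm H lH c)⁻¹ (cycPerm H lH c x) := by rw [h]
    _ = x := Equiv.symm_apply_apply _ _

lemma cycPermInv_isCycleOn :
    ((cycPerm H lH c)⁻¹).IsCycleOn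
      {x : G | (QuotientGroup.mk x : G ⧸ H) = QuotientGroup.mk c} :=
  (cycPerm_isCycleOn H lH c hlen hnd).inv

omit hlen hnd
include hlen hnd hprod

lemma cycPermInv_step {n : ℕ} (r : Fin (n + 1) → G)
    (hS : ∀ i : Fin lH.length, SSr r (lH.get i : G)) (x : G)
    (hx : (QuotientGroup.mk x : G ⧸ H) = QuotientGroup.mk c) :
    SSr r (x⁻¹ * (cycPerm H lH c)⁻¹ x) := by
  have hxy : cycPerm H lH c ((cycPerm H lH c)⁻¹ x) = x := Equiv.apply_symm_apply _ _
  generalize hy : (cycPerm H lH c)⁻¹ x = y at *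
  have hymem : (QuotientGroup.mk y : G ⧸ H) = QuotientGroup.mk c := by
    by_contra hne
    have := cycPerm_not_mem H lH c hlen hnd y hne
    rw [this] at hxy
    subst hxy
    exact hne hx
  have h := cycPerm_step H lH c hlen hnd hprod r hS y hymem
  rw [hxy] at h
  have h2 := SSr_inv r h
  have : (y⁻¹ * x)⁻¹ = x⁻¹ * y := by group
  rw [this] at h2
  exact h2

end NewStuff

section Counting

variable {n : ℕ} (r : Fin (n + 1) → G)
  (hlen : lH.length = Nat.card H)
  (hnd : ((List.range lH.length).map fun k => (lH.take k).prod).Nodup)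

lemma fin_val_add_one [NeZero lH.length] (i : Fin lH.length) :
    ((i + 1 : Fin lH.length) : ℕ) = ((i : ℕ) + 1) % lH.length := by
  rw [Fin.add_def, Fin.val_one']
  conv_rhs => rw [Nat.add_mod, Nat.mod_eq_of_lt i.isLt]

include hlen hnd

lemma exists_good_index
    (bad : ℕ)
    (hbad : bad = Nat.card {i : Fin lH.length //
      ¬ Commute (lH.get i : G) (r (Fin.last n)) ∧
      ¬ Commute (lH.get ⟨((i : ℕ) + 1) % lH.length, Nat.mod_lt _ i.pos⟩ : G) (r (Fin.last n))})
    (t : G) (B : G ⧸ H)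
    (hcard : bad < Nat.card {g : G // (QuotientGroup.mk g : G ⧸ H) = QuotientGroup.mk t ∧
      (QuotientGroup.mk (g * r (Fin.last n)) : G ⧸ H) = B}) :
    ∃ j : Fin lH.length,
      QuotientGroup.mk (t * pfn H lH j * r (Fin.last n)) = B ∧
      (Commute (lH.get ⟨((j : ℕ) + (lH.length - 1)) % lH.length, Nat.mod_lt _ j.pos⟩ : G)
          (r (Fin.last n)) ∨
        Commute (lH.get j : G) (r (Fin.last n))) := by
  have hK : 0 < lH.length := by
    rw [hlen]; exact Nat.card_pos
  haveI : NeZero lH.length := ⟨hK.ne'⟩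
  -- The candidate indices are in bijection with the edge set counted by `c`.
  have hmk : ∀ (x h : G), h ∈ H → QuotientGroup.mk (x * h) = (QuotientGroup.mk x : G ⧸ H) :=
    fun x h hh => QuotientGroup.mk_mul_of_mem x hh
  set rn := r (Fin.last n) with hrn
  let f : {j : Fin lH.length // (QuotientGroup.mk (t * pfn H lH j * rn) : G ⧸ H) = B} →
      {g : G // (QuotientGroup.mk g : G ⧸ H) = QuotientGroup.mk t ∧
        (QuotientGroup.mk (g * rn) : G ⧸ H) = B} :=
    fun j => ⟨t * pfn H lH j.1, ⟨hmk t _ (pfn_mem H lH _), j.2⟩⟩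
  have hfbij : Function.Bijective f := by
    constructor
    · rintro ⟨a, ha⟩ ⟨b, hb⟩ hab
      have h1 : t * pfn H lH a = t * pfn H lH b := congrArg Subtype.val hab
      have h2 : pfn H lH a = pfn H lH b := mul_left_cancel h1
      have h3 : (qlist H lH)[(a : ℕ)]'(by rw [qlist_length]; exact a.isLt) =
          (qlist H lH)[(b : ℕ)]'(by rw [qlist_length]; exact b.isLt) := by
        rw [qlist_getElem H lH a a.isLt, qlist_getElem H lH b b.isLt]; exact h2
      have h4 := ((qlist_nodup H lH hnd).getElem_inj_iff).mp h3
      exact Subtype.ext (Fin.ext h4)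
    · rintro ⟨g, hg1, hg2⟩
      have hg3 : t⁻¹ * g ∈ H := (QuotientGroup.eq).mp hg1.symm
      have hg4 : t⁻¹ * g ∈ qlist H lH := (mem_qlist_iff H lH hlen hnd _).mpr hg3
      obtain ⟨i, hi, hig⟩ := List.mem_iff_getElem.mp hg4
      have hi' : i < lH.length := by rwa [qlist_length] at hi
      have hig' : pfn H lH i = t⁻¹ * g := by rw [← hig, qlist_getElem H lH i hi']
      have hgt : t * pfn H lH i = g := by rw [hig']; group
      refine ⟨⟨⟨i, hi'⟩, ?_⟩, ?_⟩
      · show QuotientGroup.mk (t * pfn H lH i * rn) = B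
        rw [hgt]; exact hg2
      · exact Subtype.ext hgt
  have hc1 : Nat.card {j : Fin lH.length // (QuotientGroup.mk (t * pfn H lH j * rn) : G ⧸ H) = B} =
      Nat.card {g : G // (QuotientGroup.mk g : G ⧸ H) = QuotientGroup.mk t ∧
        (QuotientGroup.mk (g * rn) : G ⧸ H) = B} := Nat.card_congr (Equiv.ofBijective f hfbij)
  -- badness transport
  have hc2 : bad = Nat.card {j : Fin lH.length //
      ¬ Commute ((lH.get ⟨((j : ℕ) + (lH.length - 1)) % lH.length, Nat.mod_lt _ j.pos⟩ : H) : G)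
        rn ∧ ¬ Commute (lH.get j : G) rn} := by
    rw [hbad]
    apply Nat.card_congr
    refine Equiv.subtypeEquiv (Equiv.addRight (1 : Fin lH.length)) ?_
    intro i
    have hval : ((Equiv.addRight (1 : Fin lH.length) i : Fin lH.length) : ℕ) =
        ((i : ℕ) + 1) % lH.length := fin_val_add_one H lH i
    have hprev : ((((i : ℕ) + 1) % lH.length) + (lH.length - 1)) % lH.length = (i : ℕ) := by
      rw [Nat.mod_add_mod, show (i : ℕ) + 1 + (lH.length - 1) = (i : ℕ) + lH.length from by
        omega, Nat.add_mod_right, Nat.mod_eq_of_lt i.isLt]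
    have h2 : (⟨((i : ℕ) + 1) % lH.length, Nat.mod_lt _ i.pos⟩ : Fin lH.length) =
        Equiv.addRight (1 : Fin lH.length) i := Fin.ext (by rw [hval])
    have hx : (((Equiv.addRight (1 : Fin lH.length) i : Fin lH.length) : ℕ) +
          (lH.length - 1)) % lH.length = (i : ℕ) := by rw [hval]; exact hprev
    have h3 : (⟨(((Equiv.addRight (1 : Fin lH.length) i : Fin lH.length) : ℕ) +
          (lH.length - 1)) % lH.length,
          Nat.mod_lt _ (Equiv.addRight (1 : Fin lH.length) i).pos⟩ : Fin lH.length) = i :=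
      Fin.ext hx
    have hg1 : lH.get (⟨((i : ℕ) + 1) % lH.length, Nat.mod_lt _ i.pos⟩ : Fin lH.length) =
        lH.get (Equiv.addRight (1 : Fin lH.length) i) := congrArg lH.get h2
    have hg2 : lH.get (⟨(((Equiv.addRight (1 : Fin lH.length) i : Fin lH.length) : ℕ) +
          (lH.length - 1)) % lH.length,
          Nat.mod_lt _ (Equiv.addRight (1 : Fin lH.length) i).pos⟩ : Fin lH.length) =
        lH.get i := congrArg lH.get h3
    rw [hg1, hg2]
  by_contra hno
  push_neg at hno
  let f2 : {j : Fin lH.length // QuotientGroup.mk (t * pfn H lH j * rn) = B} →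
      {j : Fin lH.length //
        ¬ Commute ((lH.get ⟨((j : ℕ) + (lH.length - 1)) % lH.length, Nat.mod_lt _ j.pos⟩ : H) : G)
          rn ∧ ¬ Commute (lH.get j : G) rn} :=
    fun j => ⟨j.1, (hno j.1 j.2)⟩
  have hf2inj : Function.Injective f2 := by
    rintro ⟨a, _⟩ ⟨b, _⟩ hab
    exact Subtype.ext (show a = b from congrArg Subtype.val hab)
  have hle := Nat.card_le_card_of_injective f2 hf2inj
  omega

end Counting


section SpliceSec

variable {n : ℕ} (r : Fin (n + 1) → G)

/-- The invariant carried through the inductive construction: `σ` is identity off the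
union of the cosets in `W`, follows Cayley edges on it, is a single cycle there, and
on each coset of `W` there is a translate of the base Hamiltonian cycle whose
`rₙ`-commuting edges pointing outside `W` are all still (unoriented) edges of `σ`. -/
def Inv (W : Set (G ⧸ H)) (σ : Equiv.Perm G) : Prop :=
  (∀ x : G, (QuotientGroup.mk x : G ⧸ H) ∉ W → σ x = x) ∧
  (∀ x : G, (QuotientGroup.mk x : G ⧸ H) ∈ W → SSr r (x⁻¹ * σ x)) ∧
  σ.IsCycleOn {x : G | (QuotientGroup.mk x : G ⧸ H) ∈ W} ∧
  (∀ A ∈ W, ∃ t : G, (QuotientGroup.mk t : G ⧸ H) = A ∧ ∀ k : Fin lH.length,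
    Commute (lH.get k : G) (r (Fin.last n)) →
    (QuotientGroup.mk (t * pfn H lH k * r (Fin.last n)) : G ⧸ H) ∉ W →
    (σ (t * pfn H lH k) = t * pfn H lH ((k : ℕ) + 1) ∨
      σ (t * pfn H lH ((k : ℕ) + 1)) = t * pfn H lH k))

lemma splice
    (hrn2 : r (Fin.last n) * r (Fin.last n) = 1)
    (W : Set (G ⧸ H)) (σ : Equiv.Perm G) (hInv : Inv H lH r W σ)
    (B : G ⧸ H) (hB : B ∉ W)
    (u s : G) (hsH : s ∈ H) (hcomm : Commute s (r (Fin.last n)))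
    (huW : (QuotientGroup.mk u : G ⧸ H) ∈ W) (hσu : σ u = u * s)
    (hB' : (QuotientGroup.mk (u * r (Fin.last n)) : G ⧸ H) = B)
    (τ : Equiv.Perm G)
    (hτ1 : ∀ x : G, (QuotientGroup.mk x : G ⧸ H) ≠ B → τ x = x)
    (hτ2 : ∀ x : G, (QuotientGroup.mk x : G ⧸ H) = B → SSr r (x⁻¹ * τ x))
    (hτ3 : τ.IsCycleOn {x : G | (QuotientGroup.mk x : G ⧸ H) = B})
    (hτ4 : τ (u * r (Fin.last n) * s) = u * r (Fin.last n))
    (hτ5 : ∃ tB : G, (QuotientGroup.mk tB : G ⧸ H) = B ∧ ∀ k : Fin lH.length,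
      (τ (tB * pfn H lH k) = tB * pfn H lH ((k : ℕ) + 1) ∨
        τ (tB * pfn H lH ((k : ℕ) + 1)) = tB * pfn H lH k)) :
    Inv H lH r (W ∪ {B}) (σ * τ * Equiv.swap u (u * r (Fin.last n) * s)) := by
  obtain ⟨hI1, hI2, hI3, hI4⟩ := hInv
  set rn := r (Fin.last n) with hrn
  set v := u * rn * s with hv
  set σ' := σ * τ * Equiv.swap u v with hσ'
  have hmk : ∀ (x h : G), h ∈ H → QuotientGroup.mk (x * h) = (QuotientGroup.mk x : G ⧸ H) :=
    fun x h hh => QuotientGroup.mk_mul_of_mem x hh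
  have hmkv : (QuotientGroup.mk v : G ⧸ H) = B := by
    rw [hv, hmk (u * rn) s hsH, hB']
  have hBu : (QuotientGroup.mk (u * rn) : G ⧸ H) ∉ W := hB' ▸ hB
  have hWnotB : ∀ x : G, (QuotientGroup.mk x : G ⧸ H) ∈ W →
      (QuotientGroup.mk x : G ⧸ H) ≠ B := fun x hx hxB => hB (hxB ▸ hx)
  have hune : u ≠ v := by
    intro h
    exact hWnotB u huW (by rw [h, hmkv])
  -- evaluation lemmas
  have e1 : ∀ x : G, (QuotientGroup.mk x : G ⧸ H) ∈ W → x ≠ u → σ' x = σ x := by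
    intro x hx hxu
    have hxv : x ≠ v := fun h => hWnotB x hx (by rw [h, hmkv])
    simp only [hσ', Equiv.Perm.mul_apply, Equiv.swap_apply_of_ne_of_ne hxu hxv,
      hτ1 x (hWnotB x hx)]
  have e2 : ∀ x : G, (QuotientGroup.mk x : G ⧸ H) = B → x ≠ v → σ' x = τ x := by
    intro x hx hxv
    have hxu : x ≠ u := by
      intro h; subst h; exact hWnotB x huW hx
    have hτx : (QuotientGroup.mk (τ x) : G ⧸ H) = B := hτ3.1.mapsTo hx
    simp only [hσ', Equiv.Perm.mul_apply, Equiv.swap_apply_of_ne_of_ne hxu hxv,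
      hI1 (τ x) (fun hh => hB (hτx ▸ hh))]
  have e3 : σ' u = u * rn := by
    have h1 : (QuotientGroup.mk (u * rn) : G ⧸ H) ∉ W := hBu
    simp only [hσ', Equiv.Perm.mul_apply, Equiv.swap_apply_left, hτ4, hI1 _ h1]
  have e4 : σ' v = u * s := by
    have : τ u = u := hτ1 u (hWnotB u huW)
    simp only [hσ', Equiv.Perm.mul_apply, Equiv.swap_apply_right, this, hσu]
  have e0 : ∀ x : G, (QuotientGroup.mk x : G ⧸ H) ∉ W →
      (QuotientGroup.mk x : G ⧸ H) ≠ B → σ' x = x := by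
    intro x hx hxB
    have hxu : x ≠ u := fun h => hx (h ▸ huW)
    have hxv : x ≠ v := fun h => hxB (by rw [h, hmkv])
    simp only [hσ', Equiv.Perm.mul_apply, Equiv.swap_apply_of_ne_of_ne hxu hxv,
      hτ1 x hxB, hI1 x hx]
  refine ⟨?_, ?_, ?_, ?_⟩
  · -- identity off W ∪ {B}
    intro x hx
    simp only [Set.mem_union, Set.mem_singleton_iff, not_or] at hx
    exact e0 x hx.1 hx.2
  · -- steps
    intro x hx
    simp only [Set.mem_union, Set.mem_singleton_iff] at hx
    rcases hx with hx | hx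
    · by_cases hxu : x = u
      · subst hxu
        rw [e3]
        have : x⁻¹ * (x * rn) = rn := by group
        rw [this]
        exact Or.inl ⟨Fin.last n, rfl⟩
      · rw [e1 x hx hxu]; exact hI2 x hx
    · by_cases hxv : x = v
      · subst hxv
        rw [e4]
        have hst : v⁻¹ * (u * s) = rn⁻¹ := by
          have hc : rn⁻¹ * s = s * rn⁻¹ := (hcomm.inv_right).eq.symm
          calc v⁻¹ * (u * s) = s⁻¹ * (rn⁻¹ * s) := by rw [hv]; group
            _ = s⁻¹ * (s * rn⁻¹) := by rw [hc]
            _ = rn⁻¹ := by group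
        rw [hst]
        exact Or.inr ⟨Fin.last n, by simp [hrn]⟩
      · rw [e2 x hx hxv]; exact hτ2 x hx
  · -- cycle on the union
    have hsets : {x : G | (QuotientGroup.mk x : G ⧸ H) ∈ W ∪ {B}} =
        {x : G | (QuotientGroup.mk x : G ⧸ H) ∈ W} ∪
          {x : G | (QuotientGroup.mk x : G ⧸ H) = B} := by
      ext x; simp [Set.mem_union, or_comm]
    rw [hsets]
    apply merge_isCycleOn σ τ _ _ _ hI3 hτ3 (fun x hx => hI1 x hx) (fun x hx => hτ1 x hx)
      u v huW hmkv
    rw [Set.disjoint_left]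
    intro x hx hx'
    exact hWnotB x hx hx'
  · -- per-coset translates
    intro A hA
    rcases hA with hA | hA
    · -- old coset
      obtain ⟨t, ht, h4⟩ := hI4 A hA
      refine ⟨t, ht, ?_⟩
      intro k hkc hkW
      have hkW' : (QuotientGroup.mk (t * pfn H lH k * rn) : G ⧸ H) ∉ W :=
        fun h => hkW (Or.inl h)
      have hkB : (QuotientGroup.mk (t * pfn H lH k * rn) : G ⧸ H) ≠ B :=
        fun h => hkW (Or.inr h)
      have hmkt1 : (QuotientGroup.mk (t * pfn H lH k) : G ⧸ H) ∈ W := by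
        rw [hmk t _ (pfn_mem H lH _), ht]; exact hA
      have hmkt2 : (QuotientGroup.mk (t * pfn H lH ((k : ℕ) + 1)) : G ⧸ H) ∈ W := by
        rw [hmk t _ (pfn_mem H lH _), ht]; exact hA
      rcases h4 k hkc hkW' with hd | hd
      · -- forward edge
        by_cases hcase : t * pfn H lH k = u
        · exfalso
          apply hkB
          rw [hcase, hB']
        · left; rw [e1 _ hmkt1 hcase]; exact hd
      · by_cases hcase : t * pfn H lH ((k : ℕ) + 1) = u
        · exfalso
          apply hkB
          have h5 : t * pfn H lH k = u * s := by rw [← hd, hcase, hσu]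
          have h6 : u * s * rn = u * rn * s := by
            rw [mul_assoc, mul_assoc, hcomm.eq]
          rw [h5, h6, hmk (u * rn) s hsH, hB']
        · right; rw [e1 _ hmkt2 hcase]; exact hd
    · -- the new coset B
      obtain ⟨tB, htB, h5⟩ := hτ5
      have hAB : A = B := Set.mem_singleton_iff.mp hA
      refine ⟨tB, htB.trans hAB.symm, ?_⟩
      intro k hkc hkW
      have hkW' : (QuotientGroup.mk (tB * pfn H lH k * rn) : G ⧸ H) ∉ W :=
        fun h => hkW (Or.inl h)
      have hkB : (QuotientGroup.mk (tB * pfn H lH k * rn) : G ⧸ H) ≠ B :=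
        fun h => hkW (Or.inr h)
      have hmkt1 : (QuotientGroup.mk (tB * pfn H lH k) : G ⧸ H) = B := by
        rw [hmk tB _ (pfn_mem H lH _)]; exact htB
      have hmkt2 : (QuotientGroup.mk (tB * pfn H lH ((k : ℕ) + 1)) : G ⧸ H) = B := by
        rw [hmk tB _ (pfn_mem H lH _)]; exact htB
      rcases h5 k with hd | hd
      · by_cases hcase : tB * pfn H lH k = v
        · exfalso
          apply hkW'
          have h6 : v * rn = u * s := by
            calc v * rn = u * (rn * (s * rn)) := by rw [hv]; group
              _ = u * (rn * (rn * s)) := by rw [hcomm.eq]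
              _ = u * (rn * rn * s) := by group
              _ = u * s := by rw [hrn2, one_mul]
          rw [hcase, h6, hmk u s hsH]
          exact huW
        · left; rw [e2 _ hmkt1 hcase]; exact hd
      · by_cases hcase : tB * pfn H lH ((k : ℕ) + 1) = v
        · exfalso
          apply hkW'
          have h6 : tB * pfn H lH k = u * rn := by rw [← hd, hcase, hτ4]
          have h7 : u * rn * rn = u := by rw [mul_assoc, hrn2, mul_one]
          rw [h6, h7]
          exact huW
        · right; rw [e2 _ hmkt2 hcase]; exact hd

end SpliceSec

lemma crossing {n : ℕ} (r : Fin (n + 1) → G)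
    (hH : H = Subgroup.closure (Set.range fun i : Fin n => r i.castSucc))
    (hgen : Subgroup.closure (Set.range r) = ⊤)
    (W : Set (G ⧸ H)) (hne : W.Nonempty)
    (hnocross : ∀ g : G, (QuotientGroup.mk g : G ⧸ H) ∈ W →
      (QuotientGroup.mk (g * r (Fin.last n)) : G ⧸ H) ∈ W) :
    ∀ A : G ⧸ H, A ∈ W := by
  obtain ⟨A0, hA0⟩ := hne
  obtain ⟨g0, rfl⟩ := QuotientGroup.mk_surjective A0
  set U : Set G := {g : G | (QuotientGroup.mk g : G ⧸ H) ∈ W} with hU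
  have hUH : ∀ g ∈ U, ∀ h ∈ H, g * h ∈ U := by
    intro g hg h hh
    show (QuotientGroup.mk (g * h) : G ⧸ H) ∈ W
    rw [QuotientGroup.mk_mul_of_mem g hh]
    exact hg
  let P : Subgroup G :=
    { carrier := {h : G | ∀ g ∈ U, g * h ∈ U}
      one_mem' := by intro g hg; simpa using hg
      mul_mem' := by
        intro a b ha hb g hg
        rw [← mul_assoc]
        exact hb _ (ha g hg)
      inv_mem' := by
        intro h hh g hg
        let e : U → U := fun x => ⟨x.1 * h, hh x.1 x.2⟩
        have hinj : Function.Injective e := by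
          rintro ⟨a, _⟩ ⟨b, _⟩ hab
          exact Subtype.ext (mul_right_cancel (show a * h = b * h from congrArg Subtype.val hab))
        obtain ⟨⟨x, hx⟩, hxe⟩ := (Finite.injective_iff_surjective.mp hinj) ⟨g, hg⟩
        have h1 : x * h = g := congrArg Subtype.val hxe
        have h2 : g * h⁻¹ = x := by rw [← h1]; group
        rw [h2]
        exact hx }
  have hsub : Set.range r ⊆ (P : Set G) := by
    rintro _ ⟨i, rfl⟩
    rcases Fin.eq_castSucc_or_eq_last i with ⟨j, rfl⟩ | rfl
    · intro g hg
      refine hUH g hg _ ?_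
      rw [hH]
      exact Subgroup.subset_closure ⟨j, rfl⟩
    · intro g hg
      exact hnocross g hg
  have hPall : ∀ h : G, h ∈ P := by
    intro h
    have h1 : h ∈ Subgroup.closure (Set.range r) := by rw [hgen]; trivial
    exact (Subgroup.closure_le P).mpr hsub h1
  intro A
  obtain ⟨g, rfl⟩ := QuotientGroup.mk_surjective A
  have := hPall (g0⁻¹ * g) g0 hA0
  have h2 : g0 * (g0⁻¹ * g) = g := by group
  rw [h2] at this
  exact this

-- extraction
lemma extract {n : ℕ} (r : Fin (n + 1) → G) [Nontrivial G] (σ : Equiv.Perm G)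
    (hstep : ∀ x : G, x⁻¹ * σ x ∈ Set.range r ∨ (x⁻¹ * σ x)⁻¹ ∈ Set.range r)
    (hcycle : σ.IsCycleOn (Set.univ : Set G)) :
    ∃ l : List G, IsHamCycle (Set.range r) l := by
  classical
  have hfix : ∀ x : G, σ x ≠ x := by
    intro x hx
    obtain ⟨y, hy⟩ := exists_ne x
    obtain ⟨m, hm⟩ := hcycle.2 (Set.mem_univ x) (Set.mem_univ y)
    rw [Equiv.Perm.zpow_apply_eq_self_of_apply_eq_self hx] at hm
    exact hy hm.symm
  have hcyc : σ.IsCycle := ⟨1, hfix 1, fun y _ => hcycle.2 (Set.mem_univ 1) (Set.mem_univ y)⟩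
  letI : Fintype G := Fintype.ofFinite G
  have hsupp : σ.support = Finset.univ := by
    ext x; simp [Equiv.Perm.mem_support, hfix x]
  have hordN : orderOf σ = Nat.card G := by
    rw [hcyc.orderOf, hsupp, Finset.card_univ, Nat.card_eq_fintype_card]
  set N := Nat.card G with hN
  set f : ℕ → G := fun k => ((σ ^ k) 1)⁻¹ * (σ ^ (k + 1)) 1 with hf
  set l : List G := (List.range N).map f with hl
  have hlen : l.length = N := by simp [hl]
  have hgetl : ∀ (k : ℕ) (hk : k < N), l[k]'(by rw [hlen]; exact hk) = f k := by
    intro k hk; simp [hl]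
  have hpow1 : ∀ i, (σ ^ (i + 1)) (1 : G) = σ ((σ ^ i) 1) := by
    intro i; rw [pow_succ', Equiv.Perm.mul_apply]
  have htake : ∀ k, k ≤ N → (l.take k).prod = (σ ^ k) 1 := by
    intro k
    induction k with
    | zero => intro _; simp
    | succ k ih =>
      intro hk
      rw [List.prod_take_succ l k (by rw [hlen]; omega), ih (by omega), hgetl k (by omega), hf]
      group
  have hinj : ∀ i < N, ∀ j < N, (σ ^ i) (1 : G) = (σ ^ j) 1 → i = j := by
    have haux : ∀ i j, i ≤ j → j < N → (σ ^ i) (1 : G) = (σ ^ j) 1 → i = j := by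
      intro i j hij hjN heq
      by_contra hne
      have hd : 0 < j - i := by omega
      have h1 : (σ ^ (j - i)) ((σ ^ i) 1) = (σ ^ i) 1 := by
        rw [← Equiv.Perm.mul_apply, ← pow_add]
        rw [show j - i + i = j from by omega]
        exact heq.symm
      have h2 : σ ^ (j - i) = 1 := (hcyc.pow_eq_one_iff' (hfix ((σ ^ i) 1))).mpr h1
      have h3 : orderOf σ ∣ (j - i) := orderOf_dvd_of_pow_eq_one h2
      rw [hordN] at h3
      have := Nat.le_of_dvd hd h3
      omega
    intro i hi j hj heq
    rcases le_or_gt i j with h | h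
    · exact haux i j h hj heq
    · exact (haux j i (by omega) hi heq.symm).symm
  refine ⟨l, ?_, ?_, ?_, ?_⟩
  · intro x hx
    rw [hl, List.mem_map] at hx
    obtain ⟨k, _, rfl⟩ := hx
    have : f k = ((σ ^ k) 1)⁻¹ * σ ((σ ^ k) 1) := by rw [hf]; simp only [hpow1 k]
    rw [this]
    exact hstep ((σ ^ k) 1)
  · have h1 : l.prod = (σ ^ N) 1 := by
      rw [show l.prod = (l.take N).prod from by rw [← hlen, List.take_length], htake N le_rfl]
    rw [h1, ← hordN, pow_orderOf_eq_one]
    rfl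
  · exact hlen
  · rw [hlen]
    have hmapeq : ((List.range N).map fun k => (l.take k).prod) =
        (List.range N).map fun k => (σ ^ k) 1 := by
      apply List.map_congr_left
      intro k hk
      exact htake k (le_of_lt (List.mem_range.mp hk))
    rw [hmapeq]
    apply List.Nodup.map_on _ (List.nodup_range (n := N))
    intro i hi j hj hij
    exact hinj i (List.mem_range.mp hi) j (List.mem_range.mp hj) hij



section BaseSec

variable {n : ℕ} (r : Fin (n + 1) → G)
  (hlen : lH.length = Nat.card H)
  (hnd : ((List.range lH.length).map fun k => (lH.take k).prod).Nodup)
  (hprod : lH.prod = 1)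
  (hS : ∀ i : Fin lH.length, SSr r (lH.get i : G))

include hlen hnd hprod hS

lemma base : Inv H lH r {QuotientGroup.mk (1 : G)} (cycPerm H lH 1) := by
  refine ⟨?_, ?_, ?_, ?_⟩
  · intro x hx
    exact cycPerm_not_mem H lH 1 hlen hnd x (by simpa using hx)
  · intro x hx
    exact cycPerm_step H lH 1 hlen hnd hprod r hS x (by simpa using hx)
  · have h := cycPerm_isCycleOn H lH 1 hlen hnd
    have hset : {x : G | (QuotientGroup.mk x : G ⧸ H) = QuotientGroup.mk 1} =
        {x : G | (QuotientGroup.mk x : G ⧸ H) ∈ ({QuotientGroup.mk (1 : G)} : Set (G ⧸ H))} := by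
      ext x; simp
    rwa [hset] at h
  · intro A hA
    refine ⟨1, by simpa using (Set.mem_singleton_iff.mp hA).symm, ?_⟩
    intro k _ _
    left
    have h := cycPerm_apply H lH 1 hnd hprod k k.isLt
    simpa [one_mul] using h

end BaseSec

end Grp

end Stmt12Aux

open Stmt12Aux in
/-- Corollary 3.7. -/
theorem stmt12 {G : Type*} [Group G] [Finite G] (n : ℕ) (r : Fin (n + 1) → G)
    (hgen : Subgroup.closure (Set.range r) = ⊤)
    (hord : orderOf (r (Fin.last n)) = 2)
    (H : Subgroup G)
    (hH : H = Subgroup.closure (Set.range fun i : Fin n => r i.castSucc))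
    (lH : List H)
    (hCH : IsHamCycle {x : H | ∃ i : Fin n, (x : G) = r i.castSucc} lH)
    (bad : ℕ)
    (hbad : bad = Nat.card {i : Fin lH.length //
      ¬ Commute (lH.get i : G) (r (Fin.last n)) ∧
      ¬ Commute (lH.get ⟨((i : ℕ) + 1) % lH.length, Nat.mod_lt _ i.pos⟩ : G) (r (Fin.last n))})
    (c : G ⧸ H → G ⧸ H → ℕ)
    (hc : ∀ A B, c A B = Nat.card {g : G // QuotientGroup.mk g = A ∧
      QuotientGroup.mk (g * r (Fin.last n)) = B})
    (hlt : ∀ A B, 0 < c A B → bad < c A B) :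
    ∃ l : List G, IsHamCycle (Set.range r) l := by
  classical
  obtain ⟨hmemS, hprod, hlenH, hnd⟩ := hCH
  have hS : ∀ i : Fin lH.length, SSr r (lH.get i : G) := by
    intro i
    rcases hmemS (lH.get i) (List.get_mem lH i) with h | h
    · obtain ⟨i', hi'⟩ := h
      exact Or.inl ⟨i'.castSucc, hi'.symm⟩
    · obtain ⟨i', hi'⟩ := h
      refine Or.inr ⟨i'.castSucc, ?_⟩
      rw [← hi']
      simp
  have hrn2 : r (Fin.last n) * r (Fin.last n) = 1 := by
    have h := pow_orderOf_eq_one (r (Fin.last n))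
    rw [hord] at h
    rwa [pow_two] at h
  have hnt : Nontrivial G := by
    refine ⟨⟨r (Fin.last n), 1, ?_⟩⟩
    intro h
    rw [h, orderOf_one] at hord
    omega
  have iter : ∀ (m : ℕ) (W : Set (G ⧸ H)) (σ : Equiv.Perm G),
      Wᶜ.ncard ≤ m → W.Nonempty → Inv H lH r W σ →
      ∃ σ' : Equiv.Perm G, Inv H lH r Set.univ σ' := by
    intro m
    induction m with
    | zero =>
      intro W σ hm _ hInv
      have h0 : Wᶜ.ncard = 0 := le_antisymm hm (Nat.zero_le _)
      have h1 : Wᶜ = ∅ := (Set.ncard_eq_zero (Set.toFinite _)).mp h0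
      have h2 : W = Set.univ := by rwa [Set.compl_empty_iff] at h1
      exact ⟨σ, h2 ▸ hInv⟩
    | succ m ih =>
      intro W σ hm hne hInv
      by_cases hW : W = Set.univ
      · exact ⟨σ, hW ▸ hInv⟩
      · have hcross : ∃ g : G, (QuotientGroup.mk g : G ⧸ H) ∈ W ∧
            (QuotientGroup.mk (g * r (Fin.last n)) : G ⧸ H) ∉ W := by
          by_contra hno
          push_neg at hno
          have hAll := crossing H r hH hgen W hne hno
          exact hW (Set.eq_univ_iff_forall.mpr hAll)
        obtain ⟨g, hgW, hgB⟩ := hcross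
        have hpos : 0 < c (QuotientGroup.mk g) (QuotientGroup.mk (g * r (Fin.last n))) := by
          rw [hc]
          have : Nonempty {g' : G // QuotientGroup.mk g' = (QuotientGroup.mk g : G ⧸ H) ∧
              QuotientGroup.mk (g' * r (Fin.last n)) =
                (QuotientGroup.mk (g * r (Fin.last n)) : G ⧸ H)} := ⟨⟨g, rfl, rfl⟩⟩
          exact Nat.card_pos
        have hblt := hlt _ _ hpos
        rw [hc] at hblt
        obtain ⟨t, ht, h4⟩ := hInv.2.2.2 (QuotientGroup.mk g) hgW
        have hcard : bad < Nat.card {g' : G //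
            (QuotientGroup.mk g' : G ⧸ H) = QuotientGroup.mk t ∧
            (QuotientGroup.mk (g' * r (Fin.last n)) : G ⧸ H) =
              QuotientGroup.mk (g * r (Fin.last n))} := by
          have hteq : (QuotientGroup.mk t : G ⧸ H) = QuotientGroup.mk g := ht
          rw [hteq]
          exact hblt
        obtain ⟨j, hj1, hj2⟩ := exists_good_index H lH r hlenH hnd bad hbad t
          (QuotientGroup.mk (g * r (Fin.last n))) hcard
        obtain ⟨k, hkc, hkB⟩ : ∃ k : Fin lH.length,
            Commute (lH.get k : G) (r (Fin.last n)) ∧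
            (QuotientGroup.mk (t * pfn H lH k * r (Fin.last n)) : G ⧸ H) =
              QuotientGroup.mk (g * r (Fin.last n)) := by
          rcases hj2 with h | h
          · have hdlt : ((j : ℕ) + (lH.length - 1)) % lH.length < lH.length :=
              Nat.mod_lt _ j.pos
            refine ⟨⟨((j : ℕ) + (lH.length - 1)) % lH.length, hdlt⟩, h, ?_⟩
            have hj' : ((((j : ℕ) + (lH.length - 1)) % lH.length + 1) % lH.length) = (j : ℕ) := by
              rw [Nat.mod_add_mod,
                show (j : ℕ) + (lH.length - 1) + 1 = (j : ℕ) + lH.length from by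
                  have := j.pos; omega,
                Nat.add_mod_right, Nat.mod_eq_of_lt j.isLt]
            have hd1 : pfn H lH (((j : ℕ) + (lH.length - 1)) % lH.length + 1) =
                pfn H lH (j : ℕ) := by
              rcases Nat.lt_or_ge (((j : ℕ) + (lH.length - 1)) % lH.length + 1) lH.length
                with hlt2 | hge2
              · rw [Nat.mod_eq_of_lt hlt2] at hj'
                rw [hj']
              · have hKeq : ((j : ℕ) + (lH.length - 1)) % lH.length + 1 = lH.length := by
                  omega
                have hj0 : (j : ℕ) = 0 := by rw [← hj', hKeq, Nat.mod_self]
                rw [hKeq, pfn_length H lH hprod, hj0, pfn_zero]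
            have hps := pfn_succ H lH hdlt
            have hrel : t * pfn H lH (((j : ℕ) + (lH.length - 1)) % lH.length) =
                t * pfn H lH (j : ℕ) *
                  ((lH.get ⟨((j : ℕ) + (lH.length - 1)) % lH.length, hdlt⟩ : H) : G)⁻¹ := by
              rw [← hd1, hps]; group
            have hcomm2 :
                ((lH.get ⟨((j : ℕ) + (lH.length - 1)) % lH.length, hdlt⟩ : H) : G)⁻¹ *
                    r (Fin.last n) =
                  r (Fin.last n) *
                    ((lH.get ⟨((j : ℕ) + (lH.length - 1)) % lH.length, hdlt⟩ : H) : G)⁻¹ :=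
              (h.inv_left).eq
            calc (QuotientGroup.mk
                (t * pfn H lH (((j : ℕ) + (lH.length - 1)) % lH.length) * r (Fin.last n)) : G ⧸ H)
                = (QuotientGroup.mk (t * pfn H lH (j : ℕ) * r (Fin.last n) *
                    ((lH.get ⟨((j : ℕ) + (lH.length - 1)) % lH.length, hdlt⟩ : H) : G)⁻¹) : G ⧸ H) := by
                  rw [hrel]
                  congr 1
                  rw [mul_assoc, hcomm2, ← mul_assoc]
              _ = QuotientGroup.mk (t * pfn H lH (j : ℕ) * r (Fin.last n)) :=
                  QuotientGroup.mk_mul_of_mem _ (inv_mem (SetLike.coe_mem _))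
              _ = QuotientGroup.mk (g * r (Fin.last n)) := hj1
          · exact ⟨j, h, hj1⟩
        have hkW : (QuotientGroup.mk (t * pfn H lH k * r (Fin.last n)) : G ⧸ H) ∉ W := by
          rw [hkB]; exact hgB
        have hg0H : ((lH.get k : H) : G) ∈ H := SetLike.coe_mem _
        have huW : (QuotientGroup.mk (t * pfn H lH (k : ℕ)) : G ⧸ H) ∈ W := by
          rw [QuotientGroup.mk_mul_of_mem t (pfn_mem H lH _), ht]; exact hgW
        have huW1 : (QuotientGroup.mk (t * pfn H lH ((k : ℕ) + 1)) : G ⧸ H) ∈ W := by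
          rw [QuotientGroup.mk_mul_of_mem t (pfn_mem H lH _), ht]; exact hgW
        rcases h4 k hkc hkW with hd | hd
        · -- forward orientation
          have hσu : σ (t * pfn H lH (k : ℕ)) =
              t * pfn H lH (k : ℕ) * (lH.get k : G) := by
            rw [hd, pfn_succ H lH k.isLt]; group
          have hc₀k : t * pfn H lH (k : ℕ) * r (Fin.last n) * (pfn H lH (k : ℕ))⁻¹ *
              pfn H lH (k : ℕ) = t * pfn H lH (k : ℕ) * r (Fin.last n) := by group
          have hc₀k1 : t * pfn H lH (k : ℕ) * r (Fin.last n) * (pfn H lH (k : ℕ))⁻¹ *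
              pfn H lH ((k : ℕ) + 1) =
              t * pfn H lH (k : ℕ) * r (Fin.last n) * (lH.get k : G) := by
            rw [pfn_succ H lH k.isLt, ← mul_assoc, hc₀k]
          have happ := cycPerm_apply H lH
            (t * pfn H lH (k : ℕ) * r (Fin.last n) * (pfn H lH (k : ℕ))⁻¹) hnd hprod
            (k : ℕ) k.isLt
          rw [hc₀k, hc₀k1] at happ
          have hτ4 : (cycPerm H lH
              (t * pfn H lH (k : ℕ) * r (Fin.last n) * (pfn H lH (k : ℕ))⁻¹))⁻¹
              (t * pfn H lH (k : ℕ) * r (Fin.last n) * (lH.get k : G)) =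
              t * pfn H lH (k : ℕ) * r (Fin.last n) := by
            rw [← happ]; exact Equiv.symm_apply_apply _ _
          have hmkc₀ : (QuotientGroup.mk
              (t * pfn H lH (k : ℕ) * r (Fin.last n) * (pfn H lH (k : ℕ))⁻¹) : G ⧸ H) =
              QuotientGroup.mk (g * r (Fin.last n)) := by
            rw [QuotientGroup.mk_mul_of_mem _ (inv_mem (pfn_mem H lH _)), hkB]
          have hInv' := splice H lH r hrn2 W σ hInv
            (QuotientGroup.mk (g * r (Fin.last n))) hgB
            (t * pfn H lH (k : ℕ)) (lH.get k : G) hg0H hkc huW hσu hkB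
            ((cycPerm H lH (t * pfn H lH (k : ℕ) * r (Fin.last n) * (pfn H lH (k : ℕ))⁻¹))⁻¹)
            (fun x hx => cycPermInv_not_mem H lH _ hlenH hnd x
              (fun hh => hx (hh.trans hmkc₀)))
            (fun x hx => cycPermInv_step H lH _ hlenH hnd hprod r hS x
              (hx.trans hmkc₀.symm))
            (by
              have h := cycPermInv_isCycleOn H lH
                (t * pfn H lH (k : ℕ) * r (Fin.last n) * (pfn H lH (k : ℕ))⁻¹) hlenH hnd
              simp only [hmkc₀] at h
              exact h)
            hτ4
            ⟨t * pfn H lH (k : ℕ) * r (Fin.last n) * (pfn H lH (k : ℕ))⁻¹, hmkc₀,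
              fun k' => Or.inr (by
                rw [← cycPerm_apply H lH
                  (t * pfn H lH (k : ℕ) * r (Fin.last n) * (pfn H lH (k : ℕ))⁻¹)
                  hnd hprod (k' : ℕ) k'.isLt]
                exact Equiv.symm_apply_apply _ _)⟩
          have hm' : (W ∪ {QuotientGroup.mk (g * r (Fin.last n))})ᶜ.ncard ≤ m := by
            have hcompl : (W ∪ {QuotientGroup.mk (g * r (Fin.last n))})ᶜ =
                Wᶜ \ {(QuotientGroup.mk (g * r (Fin.last n)) : G ⧸ H)} := by
              rw [Set.compl_union]; exact (Set.diff_eq _ _).symm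
            rw [hcompl, Set.ncard_diff_singleton_of_mem (show (QuotientGroup.mk (g * r (Fin.last n)) : G ⧸ H) ∈ Wᶜ from hgB)]
            have h1 : 0 < (Wᶜ).ncard := (Set.ncard_pos (Set.toFinite _)).mpr ⟨_, hgB⟩
            omega
          exact ih _ _ hm' (hne.mono Set.subset_union_left) hInv'
        · -- backward orientation
          have hσu : σ (t * pfn H lH ((k : ℕ) + 1)) =
              t * pfn H lH ((k : ℕ) + 1) * (lH.get k : G)⁻¹ := by
            rw [hd, pfn_succ H lH k.isLt]; group
          have hB'' : (QuotientGroup.mk (t * pfn H lH ((k : ℕ) + 1) * r (Fin.last n)) : G ⧸ H) =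
              QuotientGroup.mk (g * r (Fin.last n)) := by
            have heq : t * pfn H lH ((k : ℕ) + 1) * r (Fin.last n) =
                t * pfn H lH (k : ℕ) * r (Fin.last n) * (lH.get k : G) := by
              rw [pfn_succ H lH k.isLt]
              calc t * (pfn H lH (k : ℕ) * (lH.get k : G)) * r (Fin.last n)
                  = t * pfn H lH (k : ℕ) * ((lH.get k : G) * r (Fin.last n)) := by group
                _ = t * pfn H lH (k : ℕ) * (r (Fin.last n) * (lH.get k : G)) := by rw [hkc.eq]
                _ = t * pfn H lH (k : ℕ) * r (Fin.last n) * (lH.get k : G) := by group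
            rw [heq, QuotientGroup.mk_mul_of_mem _ hg0H, hkB]
          have hc₀k : t * pfn H lH ((k : ℕ) + 1) * r (Fin.last n) * (lH.get k : G)⁻¹ *
              (pfn H lH (k : ℕ))⁻¹ * pfn H lH (k : ℕ) =
              t * pfn H lH ((k : ℕ) + 1) * r (Fin.last n) * (lH.get k : G)⁻¹ := by group
          have hc₀k1 : t * pfn H lH ((k : ℕ) + 1) * r (Fin.last n) * (lH.get k : G)⁻¹ *
              (pfn H lH (k : ℕ))⁻¹ * pfn H lH ((k : ℕ) + 1) =
              t * pfn H lH ((k : ℕ) + 1) * r (Fin.last n) := by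
            rw [pfn_succ H lH k.isLt]; group
          have happ := cycPerm_apply H lH
            (t * pfn H lH ((k : ℕ) + 1) * r (Fin.last n) * (lH.get k : G)⁻¹ *
              (pfn H lH (k : ℕ))⁻¹) hnd hprod (k : ℕ) k.isLt
          rw [hc₀k, hc₀k1] at happ
          have hmkc₀ : (QuotientGroup.mk
              (t * pfn H lH ((k : ℕ) + 1) * r (Fin.last n) * (lH.get k : G)⁻¹ *
                (pfn H lH (k : ℕ))⁻¹) : G ⧸ H) =
              QuotientGroup.mk (g * r (Fin.last n)) := by
            rw [QuotientGroup.mk_mul_of_mem _ (inv_mem (pfn_mem H lH _)),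
              QuotientGroup.mk_mul_of_mem _ (inv_mem hg0H), hB'']
          have hInv' := splice H lH r hrn2 W σ hInv
            (QuotientGroup.mk (g * r (Fin.last n))) hgB
            (t * pfn H lH ((k : ℕ) + 1)) (lH.get k : G)⁻¹ (inv_mem hg0H) hkc.inv_left
            huW1 hσu hB''
            (cycPerm H lH (t * pfn H lH ((k : ℕ) + 1) * r (Fin.last n) * (lH.get k : G)⁻¹ *
              (pfn H lH (k : ℕ))⁻¹))
            (fun x hx => cycPerm_not_mem H lH _ hlenH hnd x
              (fun hh => hx (hh.trans hmkc₀)))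
            (fun x hx => cycPerm_step H lH _ hlenH hnd hprod r hS x
              (hx.trans hmkc₀.symm))
            (by
              have h := cycPerm_isCycleOn H lH
                (t * pfn H lH ((k : ℕ) + 1) * r (Fin.last n) * (lH.get k : G)⁻¹ *
                  (pfn H lH (k : ℕ))⁻¹) hlenH hnd
              simp only [hmkc₀] at h
              exact h)
            happ
            ⟨t * pfn H lH ((k : ℕ) + 1) * r (Fin.last n) * (lH.get k : G)⁻¹ *
                (pfn H lH (k : ℕ))⁻¹, hmkc₀,
              fun k' => Or.inl (cycPerm_apply H lH _ hnd hprod (k' : ℕ) k'.isLt)⟩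
          have hm' : (W ∪ {QuotientGroup.mk (g * r (Fin.last n))})ᶜ.ncard ≤ m := by
            have hcompl : (W ∪ {QuotientGroup.mk (g * r (Fin.last n))})ᶜ =
                Wᶜ \ {(QuotientGroup.mk (g * r (Fin.last n)) : G ⧸ H)} := by
              rw [Set.compl_union]; exact (Set.diff_eq _ _).symm
            rw [hcompl, Set.ncard_diff_singleton_of_mem (show (QuotientGroup.mk (g * r (Fin.last n)) : G ⧸ H) ∈ Wᶜ from hgB)]
            have h1 : 0 < (Wᶜ).ncard := (Set.ncard_pos (Set.toFinite _)).mpr ⟨_, hgB⟩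
            omega
          exact ih _ _ hm' (hne.mono Set.subset_union_left) hInv'
  obtain ⟨σfin, hσfin⟩ := iter (({QuotientGroup.mk (1 : G)}ᶜ : Set (G ⧸ H)).ncard)
    {QuotientGroup.mk (1 : G)} (cycPerm H lH 1) le_rfl ⟨_, rfl⟩
    (base H lH r hlenH hnd hprod hS)
  have hcyc : σfin.IsCycleOn (Set.univ : Set G) := by
    have h := hσfin.2.2.1
    have hset : {x : G | (QuotientGroup.mk x : G ⧸ H) ∈ (Set.univ : Set (G ⧸ H))} =
        (Set.univ : Set G) := by ext x; simp
    rwa [hset] at h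
  exact extract r σfin (fun x => hσfin.2.1 x (Set.mem_univ _)) hcyc
end
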